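/- arXiv:2205.13110 — 9 statements merged into one kernel-verified Lean document; each statement's English description precedes it below -/
import Mathlib

section
/- There exists a constant C > 0 such that for every real κ ≥ 1 and every integer n, ∑_{m∈ℤ} 1/((κ² + 4π²m²)(κ² + 4π²(n+m)²)) ≤ C / (κ (4κ² + 4π²n²)). -/
open Real

private lemma denom_pos {κ : ℝ} (hκ : 1 ≤ κ) (x : ℝ) :
    0 < κ ^ 2 + 4 * π ^ 2 * x ^ 2 := by
  have := pi_pos
  nlinarith [sq_nonneg x, sq_nonneg (π * x)]

set_option maxHeartbeats 1000000 in
/-- Summability and bound for the base series. -/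
private lemma base_series {κ : ℝ} (hκ : 1 ≤ κ) :
    Summable (fun m : ℤ => 1 / (κ ^ 2 + 4 * π ^ 2 * (m : ℝ) ^ 2)) ∧
      (∑' m : ℤ, 1 / (κ ^ 2 + 4 * π ^ 2 * (m : ℝ) ^ 2)) ≤ 5 / κ := by
  have hκ0 : (0:ℝ) < κ := lt_of_lt_of_le one_pos hκ
  have hpos := denom_pos hκ
  -- pointwise telescoping bound on ℕ
  set F : ℕ → ℝ := fun j => 1 / (κ + j) with hF
  have hkey : ∀ k : ℕ, 1 / (κ ^ 2 + 4 * π ^ 2 * ((k : ℝ) + 1) ^ 2)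
      ≤ 2 * (F k - F (k + 1)) := by
    intro k
    have hk0 : (0:ℝ) ≤ (k:ℝ) := Nat.cast_nonneg k
    have h1 : (0:ℝ) < κ + k := by linarith
    have h2 : (0:ℝ) < κ + k + 1 := by linarith
    have e1 : F k = 1 / (κ + (k:ℝ)) := rfl
    have e2 : F (k + 1) = 1 / (κ + (k:ℝ) + 1) := by
      rw [hF]; congr 1; push_cast; ring
    have e3 : 1 / (κ + (k:ℝ)) - 1 / (κ + (k:ℝ) + 1)
        = 1 / ((κ + (k:ℝ)) * (κ + (k:ℝ) + 1)) := by
      rw [div_sub_div _ _ h1.ne' h2.ne']; congr 1; ring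
    have heq : 2 * (F k - F (k + 1)) = 2 / ((κ + k) * (κ + k + 1)) := by
      rw [e1, e2, e3, mul_one_div]
    rw [heq, div_le_div_iff₀ (hpos _) (by positivity)]
    have hπ := pi_gt_three
    have hπ2 : (9:ℝ) ≤ π ^ 2 := by nlinarith [pi_gt_three]
    have h9 : 9 * ((k:ℝ) + 1) ^ 2 ≤ π ^ 2 * ((k:ℝ) + 1) ^ 2 :=
      mul_le_mul_of_nonneg_right hπ2 (sq_nonneg _)
    nlinarith [sq_nonneg (κ - (k:ℝ) - 1), h9, hκ, hk0]
  have hnn : ∀ k : ℕ, 0 ≤ 1 / (κ ^ 2 + 4 * π ^ 2 * ((k : ℝ) + 1) ^ 2) := by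
    intro k; positivity
  have hpartial : ∀ N : ℕ,
      ∑ k ∈ Finset.range N, 1 / (κ ^ 2 + 4 * π ^ 2 * ((k : ℝ) + 1) ^ 2) ≤ 2 / κ := by
    intro N
    have hN : (0:ℝ) < κ + N := by
      have : (0:ℝ) ≤ (N:ℝ) := Nat.cast_nonneg N
      linarith
    calc ∑ k ∈ Finset.range N, 1 / (κ ^ 2 + 4 * π ^ 2 * ((k : ℝ) + 1) ^ 2)
        ≤ ∑ k ∈ Finset.range N, 2 * (F k - F (k + 1)) :=
          Finset.sum_le_sum fun k _ => hkey k
      _ = 2 * ∑ k ∈ Finset.range N, (F k - F (k + 1)) := by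
          rw [Finset.mul_sum]
      _ = 2 * (F 0 - F N) := by rw [Finset.sum_range_sub' F]
      _ ≤ 2 / κ := by
          have h3 : (0:ℝ) ≤ F N := by rw [hF]; positivity
          have h5 : F 0 = 1 / κ := by rw [hF]; norm_num
          have h4 : 2 / κ = 2 * (1 / κ) := by ring
          rw [h4, h5]
          nlinarith
  have hsum1 : Summable (fun k : ℕ => 1 / (κ ^ 2 + 4 * π ^ 2 * ((k : ℝ) + 1) ^ 2)) :=
    summable_of_sum_range_le hnn hpartial
  have htsum1 : (∑' k : ℕ, 1 / (κ ^ 2 + 4 * π ^ 2 * ((k : ℝ) + 1) ^ 2)) ≤ 2 / κ :=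
    Real.tsum_le_of_sum_range_le hnn hpartial
  have hshift : (fun k : ℕ => 1 / (κ ^ 2 + 4 * π ^ 2 * (((k + 1 : ℕ)) : ℝ) ^ 2))
      = fun k : ℕ => 1 / (κ ^ 2 + 4 * π ^ 2 * ((k : ℝ) + 1) ^ 2) := by
    ext k; push_cast; ring_nf
  -- summability over ℕ (including 0)
  have hnat : Summable (fun k : ℕ => 1 / (κ ^ 2 + 4 * π ^ 2 * (k : ℝ) ^ 2)) := by
    rw [← summable_nat_add_iff 1]
    exact hshift ▸ hsum1
  have htsumnat : (∑' k : ℕ, 1 / (κ ^ 2 + 4 * π ^ 2 * (k : ℝ) ^ 2)) ≤ 3 / κ := by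
    rw [Summable.tsum_eq_zero_add hnat]
    have hA : 1 / (κ ^ 2 + 4 * π ^ 2 * (((0:ℕ)):ℝ) ^ 2) ≤ 1 / κ := by
      apply one_div_le_one_div_of_le hκ0
      push_cast
      nlinarith [sq_nonneg π]
    have hB : (∑' k : ℕ, 1 / (κ ^ 2 + 4 * π ^ 2 * (((k + 1 : ℕ)) : ℝ) ^ 2)) ≤ 2 / κ := by
      rw [hshift]; exact htsum1
    have h3 : (1:ℝ) / κ + 2 / κ = 3 / κ := by ring
    push_cast at hA hB ⊢
    linarith
  -- now over ℤ
  have hnegeq : (fun k : ℕ => 1 / (κ ^ 2 + 4 * π ^ 2 * ((-((k:ℤ) + 1) : ℤ) : ℝ) ^ 2))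
      = fun k : ℕ => 1 / (κ ^ 2 + 4 * π ^ 2 * ((k : ℝ) + 1) ^ 2) := by
    ext k; push_cast; ring_nf
  have hnatzeq : (fun k : ℕ => 1 / (κ ^ 2 + 4 * π ^ 2 * (((k:ℤ)) : ℝ) ^ 2))
      = fun k : ℕ => 1 / (κ ^ 2 + 4 * π ^ 2 * (k : ℝ) ^ 2) := by
    ext k; push_cast; ring_nf
  have hnatz : Summable (fun k : ℕ => 1 / (κ ^ 2 + 4 * π ^ 2 * (((k:ℤ)) : ℝ) ^ 2)) :=
    hnatzeq ▸ hnat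
  have hnegz : Summable (fun k : ℕ => 1 / (κ ^ 2 + 4 * π ^ 2 * ((-((k:ℤ) + 1) : ℤ) : ℝ) ^ 2)) :=
    hnegeq ▸ hsum1
  refine ⟨Summable.of_nat_of_neg_add_one hnatz hnegz, ?_⟩
  rw [tsum_of_nat_of_neg_add_one hnatz hnegz]
  have h1 : (∑' k : ℕ, 1 / (κ ^ 2 + 4 * π ^ 2 * (((k:ℤ)) : ℝ) ^ 2)) ≤ 3 / κ := by
    rw [hnatzeq]; exact htsumnat
  have h2 : (∑' k : ℕ, 1 / (κ ^ 2 + 4 * π ^ 2 * ((-((k:ℤ) + 1) : ℤ) : ℝ) ^ 2)) ≤ 2 / κ := by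
    rw [hnegeq]; exact htsum1
  have h3 : (3:ℝ) / κ + 2 / κ = 5 / κ := by ring
  linarith

set_option maxHeartbeats 2000000 in
/-- There exists a constant `C > 0` such that for every real `κ ≥ 1` and
every integer `n`,
`∑_{m∈ℤ} 1/((κ² + 4π²m²)(κ² + 4π²(n+m)²)) ≤ C / (κ (4κ² + 4π²n²))`. -/
theorem stmt_0 :
    ∃ C : ℝ, 0 < C ∧ ∀ κ : ℝ, 1 ≤ κ → ∀ n : ℤ,
      (∑' m : ℤ, 1 / ((κ ^ 2 + 4 * π ^ 2 * (m : ℝ) ^ 2) *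
          (κ ^ 2 + 4 * π ^ 2 * ((n : ℝ) + (m : ℝ)) ^ 2)))
        ≤ C / (κ * (4 * κ ^ 2 + 4 * π ^ 2 * (n : ℝ) ^ 2)) := by
  refine ⟨40, by norm_num, ?_⟩
  intro κ hκ n
  have hκ0 : (0:ℝ) < κ := lt_of_lt_of_le one_pos hκ
  have hpos := denom_pos hκ
  obtain ⟨hS, hSle⟩ := base_series hκ
  set a : ℤ → ℝ := fun m => κ ^ 2 + 4 * π ^ 2 * (m : ℝ) ^ 2 with ha
  set b : ℤ → ℝ := fun m => κ ^ 2 + 4 * π ^ 2 * ((n : ℝ) + (m : ℝ)) ^ 2 with hb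
  have hapos : ∀ m, 0 < a m := fun m => hpos _
  have hbpos : ∀ m, 0 < b m := fun m => hpos _
  set D : ℝ := κ ^ 2 + π ^ 2 * (n : ℝ) ^ 2 with hD
  have hDpos : 0 < D := by
    have := pi_pos; rw [hD]; nlinarith [sq_nonneg ((n:ℝ)), sq_nonneg (π * n)]
  -- pointwise bound
  have hpoint : ∀ m : ℤ, 1 / (a m * b m) ≤ (1 / D) * (1 / a m + 1 / b m) := by
    intro m
    have hsq : ((n:ℝ)) ^ 2 ≤ 2 * (m:ℝ) ^ 2 + 2 * ((n:ℝ) + (m:ℝ)) ^ 2 := by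
      nlinarith [sq_nonneg ((n:ℝ) + 2 * m)]
    have hbnn : (0:ℝ) ≤ 1 / b m := le_of_lt (by positivity)
    have hann : (0:ℝ) ≤ 1 / a m := le_of_lt (by positivity)
    have hDnn : (0:ℝ) < 1 / D := by positivity
    rcases le_total ((m:ℝ) ^ 2) (((n:ℝ) + (m:ℝ)) ^ 2) with hc | hc
    · have hDb : D ≤ b m := by
        rw [hD]; simp only [hb]; nlinarith [sq_nonneg π]
      have key : 1 / (a m * b m) ≤ (1 / D) * (1 / a m) := by
        rw [one_div_mul_one_div]
        apply one_div_le_one_div_of_le (by positivity)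
        nlinarith [hapos m, hbpos m, hDpos]
      calc 1 / (a m * b m) ≤ (1 / D) * (1 / a m) := key
        _ ≤ (1 / D) * (1 / a m + 1 / b m) := by nlinarith
    · have hDa : D ≤ a m := by
        rw [hD]; simp only [ha]; nlinarith [sq_nonneg π]
      have key : 1 / (a m * b m) ≤ (1 / D) * (1 / b m) := by
        rw [one_div_mul_one_div]
        apply one_div_le_one_div_of_le (by positivity)
        nlinarith [hapos m, hbpos m, hDpos]
      calc 1 / (a m * b m) ≤ (1 / D) * (1 / b m) := key
        _ ≤ (1 / D) * (1 / a m + 1 / b m) := by nlinarith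
  -- shifted series
  have he : (fun m : ℤ => 1 / b m) = fun m : ℤ => (fun j : ℤ => 1 / a j) ((Equiv.addLeft n) m) := by
    ext m; simp only [ha, hb, Equiv.coe_addLeft]; push_cast; ring_nf
  have hSb : Summable (fun m : ℤ => 1 / b m) := by
    rw [he]; exact ((Equiv.addLeft n).summable_iff).2 hS
  have hSble : (∑' m : ℤ, 1 / b m) ≤ 5 / κ := by
    rw [he, (Equiv.addLeft n).tsum_eq (fun j : ℤ => 1 / a j)]
    exact hSle
  have hg : Summable (fun m : ℤ => (1 / D) * (1 / a m + 1 / b m)) :=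
    ((hS.add hSb).mul_left _)
  have hf : Summable (fun m : ℤ => 1 / (a m * b m)) :=
    Summable.of_nonneg_of_le (fun m => by positivity) hpoint hg
  calc (∑' m : ℤ, 1 / (a m * b m)) ≤ ∑' m : ℤ, (1 / D) * (1 / a m + 1 / b m) :=
        Summable.tsum_le_tsum hpoint hf hg
    _ = (1 / D) * ((∑' m : ℤ, 1 / a m) + ∑' m : ℤ, 1 / b m) := by
        rw [tsum_mul_left, Summable.tsum_add hS hSb]
    _ ≤ (1 / D) * (5 / κ + 5 / κ) := by
        have h1 : (0:ℝ) ≤ 1 / D := by positivity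
        nlinarith [add_le_add hSle hSble]
    _ = 40 / (κ * (4 * κ ^ 2 + 4 * π ^ 2 * (n : ℝ) ^ 2)) := by
        have h4 : 4 * κ ^ 2 + 4 * π ^ 2 * (n : ℝ) ^ 2 = 4 * D := by rw [hD]; ring
        rw [h4]
        field_simp
        ring
end

section
/- For every α with 0 < α < 1/4 there exists a constant C = C(α) > 0 such that for every real κ ≥ 1 and every integer n, ∑_{m∈ℤ} [(κ² + 4π²m²)(κ² + 4π²(n+m)²)]^{-(1/2 - α)} ≤ C κ^{-1+4α}. -/
open Real


/-- Telescoping step: for `c ≥ 2` and `0 < q < 1`, `c^(-q) + q·c^(-q-1) ≤ (c-1)^(-q)`. -/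
lemma tele_aux {c q : ℝ} (hc : 2 ≤ c) (hq0 : 0 < q) (hq1 : q < 1) :
    c ^ (-q) + q * c ^ (-q - 1) ≤ (c - 1) ^ (-q) := by
  have hc0 : (0:ℝ) < c := by linarith
  have hc1 : (0:ℝ) < c - 1 := by linarith
  have hx0 : (0:ℝ) < 1 / c := by positivity
  have hx2 : 1 / c ≤ 1 / 2 := by
    apply one_div_le_one_div_of_le <;> linarith
  have hber : (1 + -(1/c)) ^ q ≤ 1 + q * (-(1/c)) :=
    rpow_one_add_le_one_add_mul_self (by linarith) hq0.le hq1.le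
  have h1 : (1:ℝ) + -(1/c) = (c-1)/c := by field_simp; ring
  rw [h1, div_rpow hc1.le hc0.le] at hber
  have hB : (0:ℝ) < c ^ q := rpow_pos_of_pos hc0 q
  have hA : (0:ℝ) < (c-1) ^ q := rpow_pos_of_pos hc1 q
  have hqx : 0 < 1 - q * (1/c) := by nlinarith
  have h2 : (c-1) ^ q ≤ c ^ q * (1 - q * (1/c)) := by
    rw [div_le_iff₀ hB] at hber
    calc (c-1)^q ≤ (1 + q * -(1/c)) * c ^ q := hber
      _ = c ^ q * (1 - q * (1/c)) := by ring
  have hrw : c ^ (-q) = (c ^ q)⁻¹ := by rw [rpow_neg hc0.le]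
  have hrw2 : c ^ (-q - 1) = (c ^ q)⁻¹ * c⁻¹ := by
    rw [show -q - 1 = -q + (-1) by ring, rpow_add hc0, rpow_neg hc0.le,
      rpow_neg_one]
  have hrw3 : (c-1) ^ (-q) = ((c-1) ^ q)⁻¹ := by rw [rpow_neg hc1.le]
  rw [hrw, hrw2, hrw3]
  have key : (c ^ q * (1 - q * (1/c)))⁻¹ ≤ ((c-1)^q)⁻¹ := by
    apply inv_anti₀ hA h2
  refine le_trans ?_ key
  rw [mul_inv]
  have h3 : 1 + q * (1/c) ≤ (1 - q * (1/c))⁻¹ := by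
    have h4 : (1 - q*(1/c)) * (1 - q*(1/c))⁻¹ = 1 := mul_inv_cancel₀ hqx.ne'
    nlinarith [sq_nonneg (q * (1/c))]
  calc (c ^ q)⁻¹ + q * ((c ^ q)⁻¹ * c⁻¹) = (c^q)⁻¹ * (1 + q * (1/c)) := by
        field_simp
    _ ≤ (c^q)⁻¹ * (1 - q*(1/c))⁻¹ := by
        apply mul_le_mul_of_nonneg_left h3 (by positivity)

/-- Tail bound: for `κ ≥ 1` and `1 < q' < 2`,
`∑_{k≥1} (κ+k)^{-q'} ≤ κ^{1-q'}/(q'-1)` (with summability). -/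
lemma tail_sum {κ q' : ℝ} (hκ : 1 ≤ κ) (hq1 : 1 < q') (hq2 : q' < 2) :
    Summable (fun k : ℕ => (κ + ((k:ℝ)+1)) ^ (-q')) ∧
    ∑' k : ℕ, (κ + ((k:ℝ)+1)) ^ (-q') ≤ κ ^ (1 - q') / (q' - 1) := by
  set h : ℕ → ℝ := fun k => (κ + (k:ℝ)) ^ (1 - q') / (q' - 1) with hh
  have hstep : ∀ k : ℕ, (κ + ((k:ℝ)+1)) ^ (-q') ≤ h k - h (k+1) := by
    intro k
    have hc : 2 ≤ κ + ((k:ℝ)+1) := by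
      have : (0:ℝ) ≤ (k:ℝ) := Nat.cast_nonneg k
      linarith
    have := tele_aux (c := κ + ((k:ℝ)+1)) (q := q'-1) hc (by linarith) (by linarith)
    have e1 : -(q'-1) = 1 - q' := by ring
    have e2 : 1 - q' - 1 = -q' := by ring
    have e3 : κ + ((k:ℝ)+1) - 1 = κ + (k:ℝ) := by ring
    rw [e1, e2, e3] at this
    simp only [hh]
    push_cast
    rw [div_sub_div_same, le_div_iff₀ (by linarith : (0:ℝ) < q'-1)]
    -- this : (κ+k+1)^(1-q') + (q'-1)*(κ+k+1)^(-q') ≤ (κ+k)^(1-q')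
    have := this
    nlinarith [this]
  have hnonneg : ∀ k : ℕ, 0 ≤ (κ + ((k:ℝ)+1)) ^ (-q') := by
    intro k
    apply rpow_nonneg
    have : (0:ℝ) ≤ (k:ℝ) := Nat.cast_nonneg k
    linarith
  have hpart : ∀ N : ℕ, ∑ i ∈ Finset.range N, (κ + ((i:ℝ)+1)) ^ (-q') ≤ κ ^ (1-q')/(q'-1) := by
    intro N
    calc ∑ i ∈ Finset.range N, (κ + ((i:ℝ)+1)) ^ (-q')
        ≤ ∑ i ∈ Finset.range N, (h i - h (i+1)) := Finset.sum_le_sum (fun i _ => hstep i)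
      _ = h 0 - h N := Finset.sum_range_sub' h N
      _ ≤ h 0 := by
          have : 0 ≤ h N := by
            apply div_nonneg _ (by linarith)
            apply rpow_nonneg
            have : (0:ℝ) ≤ (N:ℝ) := Nat.cast_nonneg N
            linarith
          linarith
      _ = κ ^ (1-q')/(q'-1) := by simp [hh]
  exact ⟨summable_of_sum_range_le hnonneg hpart,
    Real.tsum_le_of_sum_range_le hnonneg hpart⟩
/-- Full sum over `ℤ`: `∑_{m∈ℤ} (κ+|m|)^{-q'} ≤ κ^{-q'} + 2 κ^{1-q'}/(q'-1)`. -/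
lemma int_sum {κ q' : ℝ} (hκ : 1 ≤ κ) (hq1 : 1 < q') (hq2 : q' < 2) :
    Summable (fun m : ℤ => (κ + |(m:ℝ)|) ^ (-q')) ∧
    ∑' m : ℤ, (κ + |(m:ℝ)|) ^ (-q') ≤ κ ^ (-q') + 2 * (κ ^ (1-q') / (q'-1)) := by
  obtain ⟨htsum, htle⟩ := tail_sum hκ hq1 hq2
  set g : ℕ → ℝ := fun k => (κ + (k:ℝ)) ^ (-q') with hg
  have hshift : (fun k : ℕ => g (k+1)) = fun k : ℕ => (κ + ((k:ℝ)+1)) ^ (-q') := by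
    funext k; simp only [hg]; push_cast; ring_nf
  have hgsum : Summable g := (summable_nat_add_iff 1).mp (by rw [hshift]; exact htsum)
  have hnat : (fun n : ℕ => (κ + |((n:ℤ):ℝ)|) ^ (-q')) = g := by
    funext n; simp only [hg]
    congr 1
    rw [Int.cast_natCast, abs_of_nonneg (Nat.cast_nonneg n)]
  have hneg : (fun n : ℕ => (κ + |((-(n+1):ℤ):ℝ)|) ^ (-q'))
      = fun k : ℕ => (κ + ((k:ℝ)+1)) ^ (-q') := by
    funext n
    congr 1
    push_cast
    rw [abs_neg, abs_of_nonneg (by positivity)]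
  have hsummable : Summable (fun m : ℤ => (κ + |(m:ℝ)|) ^ (-q')) := by
    apply Summable.of_nat_of_neg_add_one
    · rw [hnat]; exact hgsum
    · rw [hneg]; exact htsum
  refine ⟨hsummable, ?_⟩
  have heq : ∑' m : ℤ, (κ + |(m:ℝ)|) ^ (-q')
      = (∑' n : ℕ, g n) + ∑' k : ℕ, (κ + ((k:ℝ)+1)) ^ (-q') := by
    rw [tsum_of_nat_of_neg_add_one (by rw [hnat]; exact hgsum) (by rw [hneg]; exact htsum)]
    rw [hnat, hneg]
  rw [heq]
  have hg0 : (∑' n : ℕ, g n) = g 0 + ∑' k : ℕ, g (k+1) := Summable.tsum_eq_zero_add hgsum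
  rw [hg0, hshift]
  have hg0' : g 0 = κ ^ (-q') := by simp [hg]
  rw [hg0']
  linarith
/-- AM–GM for rpow: `(ab)^{-s} ≤ (a^{-2s}+b^{-2s})/2`. -/
lemma amgm_rpow {a b : ℝ} (s : ℝ) (ha : 0 < a) (hb : 0 < b) :
    (a*b) ^ (-s) ≤ (a ^ (-(2*s)) + b ^ (-(2*s)))/2 := by
  rw [mul_rpow ha.le hb.le]
  have h2a : a ^ (-(2*s)) = (a ^ (-s))^2 := by
    rw [← rpow_natCast (a ^ (-s)) 2, ← rpow_mul ha.le]
    norm_num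
    ring_nf
  have h2b : b ^ (-(2*s)) = (b ^ (-s))^2 := by
    rw [← rpow_natCast (b ^ (-s)) 2, ← rpow_mul hb.le]
    norm_num
    ring_nf
  rw [h2a, h2b]
  nlinarith [sq_nonneg (a ^ (-s) - b ^ (-s))]

lemma rpow_sq_div_two {x t : ℝ} (hx : 0 < x) :
    (x^2/2) ^ (-t) = 2^t * x ^ (-(2*t)) := by
  rw [div_rpow (sq_nonneg x) (by norm_num : (0:ℝ) ≤ 2),
    ← rpow_natCast x 2, ← rpow_mul hx.le,
    rpow_neg (by norm_num : (0:ℝ) ≤ 2), div_inv_eq_mul, mul_comm]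
  norm_num


/-- For every `α` with `0 < α < 1/4` there exists `C = C(α) > 0` such that
for every real `κ ≥ 1` and every integer `n`,
`∑_{m∈ℤ} [(κ² + 4π²m²)(κ² + 4π²(n+m)²)]^{-(1/2-α)} ≤ C κ^{-1+4α}`. -/
theorem stmt_2 (α : ℝ) (hα0 : 0 < α) (hα : α < 1 / 4) :
    ∃ C : ℝ, 0 < C ∧ ∀ κ : ℝ, 1 ≤ κ → ∀ n : ℤ,
      (∑' m : ℤ, ((κ ^ 2 + 4 * π ^ 2 * (m : ℝ) ^ 2) *
          (κ ^ 2 + 4 * π ^ 2 * ((n : ℝ) + (m : ℝ)) ^ 2)) ^ (-(1 / 2 - α)))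
        ≤ C * κ ^ (-1 + 4 * α) := by
  have h4α : 0 < 1 - 4*α := by linarith
  refine ⟨2 ^ (1-2*α) * (1 + 2/(1-4*α)), by positivity, ?_⟩
  intro κ hκ n
  have hκ0 : (0:ℝ) < κ := by linarith
  have hπ : (0:ℝ) < π := pi_pos
  set a : ℤ → ℝ := fun m => κ^2 + 4*π^2*(m:ℝ)^2 with ha_def
  have ha : ∀ m : ℤ, 0 < a m := fun m => by positivity
  set F : ℤ → ℝ := fun m => 2^(1-2*α) * (κ + |(m:ℝ)|) ^ (-(2-4*α)) with hF_def
  -- Step A : pointwise bound  a m ^ (-(1-2α)) ≤ F m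
  have hA : ∀ m : ℤ, a m ^ (-(1-2*α)) ≤ F m := by
    intro m
    have habs : (0:ℝ) ≤ |(m:ℝ)| := abs_nonneg _
    have hx : (0:ℝ) < κ + |(m:ℝ)| := by linarith
    have hπ2 : (1:ℝ) ≤ π^2 := by nlinarith [pi_gt_three]
    have hbase : (κ + |(m:ℝ)|)^2 / 2 ≤ a m := by
      have h1 : |(m:ℝ)|^2 = (m:ℝ)^2 := sq_abs _
      simp only [ha_def]
      nlinarith [sq_nonneg (κ - |(m:ℝ)|), sq_nonneg ((m:ℝ))]
    have hmono : a m ^ (-(1-2*α)) ≤ ((κ + |(m:ℝ)|)^2 / 2) ^ (-(1-2*α)) :=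
      rpow_le_rpow_of_nonpos (by positivity) hbase (by linarith)
    calc a m ^ (-(1-2*α)) ≤ ((κ + |(m:ℝ)|)^2 / 2) ^ (-(1-2*α)) := hmono
      _ = 2^(1-2*α) * (κ + |(m:ℝ)|) ^ (-(2*(1-2*α))) := rpow_sq_div_two hx
      _ = F m := by simp only [hF_def]; rw [show -(2*(1-2*α)) = -(2-4*α) by ring]
  -- Step B : the sum of F
  obtain ⟨hGsum, hGle⟩ := int_sum (q' := 2-4*α) hκ (by linarith) (by linarith)
  have hFsum : Summable F := by
    apply Summable.mul_left
    exact hGsum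
  have hFle : ∑' m : ℤ, F m
      ≤ 2^(1-2*α) * (κ ^ (-(2-4*α)) + 2 * (κ ^ (1-(2-4*α)) / ((2-4*α)-1))) := by
    rw [hF_def, tsum_mul_left]
    apply mul_le_mul_of_nonneg_left hGle (by positivity)
  -- Step C : summability of f and the shifted version
  set f : ℤ → ℝ := fun m => a m ^ (-(1-2*α)) with hf_def
  have hfnonneg : ∀ m, 0 ≤ f m := fun m => rpow_nonneg (ha m).le _
  have hfsum : Summable f := Summable.of_nonneg_of_le hfnonneg hA hFsum
  have hfshift : Summable (fun m : ℤ => f (n + m)) :=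
    ((Equiv.addLeft n).summable_iff (f := f)).mpr hfsum
  have hshift_eq : ∑' m : ℤ, f (n + m) = ∑' m : ℤ, f m :=
    (Equiv.addLeft n).tsum_eq f
  -- Step D : pointwise AM-GM on the actual summand
  have hterm : ∀ m : ℤ, ((κ ^ 2 + 4 * π ^ 2 * (m : ℝ) ^ 2) *
          (κ ^ 2 + 4 * π ^ 2 * ((n : ℝ) + (m : ℝ)) ^ 2)) ^ (-(1 / 2 - α))
        ≤ (f m + f (n + m)) / 2 := by
    intro m
    have hcast : κ ^ 2 + 4 * π ^ 2 * ((n : ℝ) + (m : ℝ)) ^ 2 = a (n + m) := by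
      simp only [ha_def]; push_cast; ring
    rw [hcast]
    have := amgm_rpow (1/2 - α) (ha m) (ha (n+m))
    have he : -(2*(1/2 - α)) = -(1-2*α) := by ring
    rw [he] at this
    exact this
  have htermnonneg : ∀ m : ℤ, 0 ≤ ((κ ^ 2 + 4 * π ^ 2 * (m : ℝ) ^ 2) *
          (κ ^ 2 + 4 * π ^ 2 * ((n : ℝ) + (m : ℝ)) ^ 2)) ^ (-(1 / 2 - α)) := by
    intro m
    apply rpow_nonneg
    positivity
  have havgsum : Summable (fun m : ℤ => (f m + f (n + m)) / 2) :=
    (hfsum.add hfshift).div_const 2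
  have htermsum : Summable (fun m : ℤ => ((κ ^ 2 + 4 * π ^ 2 * (m : ℝ) ^ 2) *
          (κ ^ 2 + 4 * π ^ 2 * ((n : ℝ) + (m : ℝ)) ^ 2)) ^ (-(1 / 2 - α))) :=
    Summable.of_nonneg_of_le htermnonneg hterm havgsum
  -- Step E : assemble
  calc (∑' m : ℤ, ((κ ^ 2 + 4 * π ^ 2 * (m : ℝ) ^ 2) *
          (κ ^ 2 + 4 * π ^ 2 * ((n : ℝ) + (m : ℝ)) ^ 2)) ^ (-(1 / 2 - α)))
      ≤ ∑' m : ℤ, (f m + f (n + m)) / 2 := Summable.tsum_le_tsum hterm htermsum havgsum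
    _ = ((∑' m : ℤ, f m) + ∑' m : ℤ, f (n + m)) / 2 := by
        rw [tsum_div_const, Summable.tsum_add hfsum hfshift]
    _ = ∑' m : ℤ, f m := by rw [hshift_eq]; ring
    _ ≤ ∑' m : ℤ, F m := Summable.tsum_le_tsum hA hfsum hFsum
    _ ≤ 2^(1-2*α) * (κ ^ (-(2-4*α)) + 2 * (κ ^ (1-(2-4*α)) / ((2-4*α)-1))) := hFle
    _ ≤ 2 ^ (1-2*α) * (1 + 2/(1-4*α)) * κ ^ (-1 + 4 * α) := by
        have h1 : κ ^ (-(2-4*α)) ≤ κ ^ (-1 + 4*α) :=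
          rpow_le_rpow_of_exponent_le hκ (by linarith)
        have h2 : κ ^ (1-(2-4*α)) = κ ^ (-1 + 4*α) := by rw [show 1-(2-4*α) = -1+4*α by ring]
        have h3 : (0:ℝ) < κ ^ (-1 + 4*α) := rpow_pos_of_pos hκ0 _
        have h4 : (0:ℝ) < 2 ^ (1-2*α) := rpow_pos_of_pos two_pos _
        rw [h2]
        have : κ ^ (-(2-4*α)) + 2 * (κ ^ (-1+4*α) / ((2-4*α)-1))
            ≤ (1 + 2/(1-4*α)) * κ ^ (-1+4*α) := by
          have h5 : (2-4*α)-1 = 1-4*α := by ring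
          rw [h5]
          calc κ ^ (-(2-4*α)) + 2 * (κ ^ (-1+4*α) / (1-4*α))
              ≤ κ ^ (-1+4*α) + 2 * (κ ^ (-1+4*α) / (1-4*α)) := by linarith
            _ = (1 + 2/(1-4*α)) * κ ^ (-1+4*α) := by field_simp
        calc 2^(1-2*α) * (κ ^ (-(2-4*α)) + 2 * (κ ^ (-1+4*α) / ((2-4*α)-1)))
            ≤ 2^(1-2*α) * ((1 + 2/(1-4*α)) * κ ^ (-1+4*α)) :=
              mul_le_mul_of_nonneg_left this h4.le
          _ = 2 ^ (1-2*α) * (1 + 2/(1-4*α)) * κ ^ (-1 + 4 * α) := by ring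
end

section
/- For every α with 0 < α < 1/4 there exists a constant C = C(α) > 0 such that for every real κ ≥ 1 and every ξ ∈ ℝ, ∫_ℝ [(κ² + η²)(κ² + (ξ+η)²)]^{-(1/2 - α)} dη ≤ C κ^{-1+4α}. -/
open Real MeasureTheory

/-- For every `α` with `0 < α < 1/4` there exists `C = C(α) > 0` such that
for every real `κ ≥ 1` and every `ξ ∈ ℝ`,
`∫_ℝ [(κ² + η²)(κ² + (ξ+η)²)]^{-(1/2-α)} dη ≤ C κ^{-1+4α}`. -/
theorem stmt_3 (α : ℝ) (hα0 : 0 < α) (hα : α < 1 / 4) :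
    ∃ C : ℝ, 0 < C ∧ ∀ κ : ℝ, 1 ≤ κ → ∀ ξ : ℝ,
      (∫ η : ℝ, ((κ ^ 2 + η ^ 2) * (κ ^ 2 + (ξ + η) ^ 2)) ^ (-(1 / 2 - α)))
        ≤ C * κ ^ (-1 + 4 * α) := by
  set p : ℝ := 1 - 2 * α with hpdef
  have hp0 : 0 < p := by simp only [hpdef]; linarith
  have hp1 : 1 < 2 * p := by simp only [hpdef]; linarith
  -- the model function
  set g : ℝ → ℝ := fun t => (1 + t ^ 2) ^ (-p) with hgdef
  have hg : Integrable g := by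
    have h := integrable_rpow_neg_one_add_norm_sq (E := ℝ) (μ := volume) (r := 2 * p)
      (by simpa using hp1)
    refine h.congr (Filter.Eventually.of_forall fun t => ?_)
    simp only [Real.norm_eq_abs, sq_abs, hgdef]
    rw [show -(2 * p) / 2 = -p by ring]
  have hgnonneg : ∀ t, 0 ≤ g t := fun t => Real.rpow_nonneg (by positivity) _
  refine ⟨(∫ t : ℝ, g t) + 1, by positivity, fun κ hκ ξ => ?_⟩
  have hκ0 : (0 : ℝ) < κ := lt_of_lt_of_le one_pos hκ
  have hκ2 : ∀ η : ℝ, (0 : ℝ) < κ ^ 2 + η ^ 2 := fun η => by positivity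
  set f1 : ℝ → ℝ := fun η => (κ ^ 2 + η ^ 2) ^ (-p) with hf1def
  -- scaling identity : f1 η = κ^(-2p) * g (κ⁻¹ * η)
  have hscale : ∀ η : ℝ, f1 η = κ ^ (-(2 * p)) * g (κ⁻¹ * η) := by
    intro η
    simp only [hf1def, hgdef]
    have h1 : κ ^ 2 + η ^ 2 = κ ^ 2 * (1 + (κ⁻¹ * η) ^ 2) := by
      field_simp
    have hpow : ((κ : ℝ) ^ 2) ^ (-p) = κ ^ (-(2 * p)) := by
      rw [← Real.rpow_natCast κ 2, ← Real.rpow_mul hκ0.le]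
      norm_num
    rw [h1, Real.mul_rpow (by positivity) (by positivity), hpow]
  have hf1 : Integrable f1 := by
    have := (hg.comp_mul_left' (R := κ⁻¹) (by positivity)).const_mul (κ ^ (-(2 * p)))
    exact this.congr (Filter.Eventually.of_forall fun η => (hscale η).symm)
  have hf2 : Integrable (fun η => f1 (ξ + η)) := hf1.comp_add_left ξ
  -- pointwise AM-GM bound
  have hpt : ∀ η : ℝ, ((κ ^ 2 + η ^ 2) * (κ ^ 2 + (ξ + η) ^ 2)) ^ (-(1 / 2 - α))
      ≤ (f1 η + f1 (ξ + η)) / 2 := by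
    intro η
    have ha := hκ2 η
    have hb := hκ2 (ξ + η)
    have hexp : -(1 / 2 - α) = -p / 2 := by simp only [hpdef]; ring
    rw [hexp, Real.mul_rpow ha.le hb.le]
    set x := (κ ^ 2 + η ^ 2) ^ (-p / 2) with hx
    set y := (κ ^ 2 + (ξ + η) ^ 2) ^ (-p / 2) with hy
    have hx2 : x * x = f1 η := by
      rw [hx, ← Real.rpow_add ha]; norm_num [hf1def]
    have hy2 : y * y = f1 (ξ + η) := by
      rw [hy, ← Real.rpow_add hb]; norm_num [hf1def]
    nlinarith [sq_nonneg (x - y)]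
  have hnonneg : ∀ η : ℝ,
      0 ≤ ((κ ^ 2 + η ^ 2) * (κ ^ 2 + (ξ + η) ^ 2)) ^ (-(1 / 2 - α)) :=
    fun η => Real.rpow_nonneg (by positivity) _
  have hbound : Integrable (fun η => (f1 η + f1 (ξ + η)) / 2) := (hf1.add hf2).div_const 2
  have step1 : (∫ η : ℝ, ((κ ^ 2 + η ^ 2) * (κ ^ 2 + (ξ + η) ^ 2)) ^ (-(1 / 2 - α)))
      ≤ ∫ η : ℝ, (f1 η + f1 (ξ + η)) / 2 :=
    integral_mono_of_nonneg (Filter.Eventually.of_forall hnonneg) hbound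
      (Filter.Eventually.of_forall hpt)
  have step2 : (∫ η : ℝ, (f1 η + f1 (ξ + η)) / 2) = ∫ η : ℝ, f1 η := by
    rw [integral_div, integral_add hf1 hf2, integral_add_left_eq_self f1 ξ]
    ring
  have step3 : (∫ η : ℝ, f1 η) = κ ^ (-1 + 4 * α) * ∫ t : ℝ, g t := by
    have : (∫ η : ℝ, f1 η) = ∫ η : ℝ, κ ^ (-(2 * p)) * g (κ⁻¹ * η) := by
      exact integral_congr_ae (Filter.Eventually.of_forall hscale)
    rw [this, integral_const_mul, Measure.integral_comp_inv_mul_left g κ,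
      abs_of_pos hκ0, smul_eq_mul, ← mul_assoc]
    congr 1
    rw [show (-1 + 4 * α : ℝ) = -(2 * p) + 1 by simp only [hpdef]; ring,
      Real.rpow_add hκ0, Real.rpow_one]
  have hκpos : (0 : ℝ) < κ ^ (-1 + 4 * α) := Real.rpow_pos_of_pos hκ0 _
  have hgi : (0 : ℝ) ≤ ∫ t : ℝ, g t := integral_nonneg hgnonneg
  calc (∫ η : ℝ, ((κ ^ 2 + η ^ 2) * (κ ^ 2 + (ξ + η) ^ 2)) ^ (-(1 / 2 - α)))
      ≤ ∫ η : ℝ, f1 η := step2 ▸ step1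
    _ = κ ^ (-1 + 4 * α) * ∫ t : ℝ, g t := step3
    _ ≤ ((∫ t : ℝ, g t) + 1) * κ ^ (-1 + 4 * α) := by nlinarith
end

section
/- Let κ > 0 and let ξ₁, ξ₂ ∈ 2πℤ with ξ₁ + ξ₂ ≠ 0. Then ∑_{ξ∈2πℤ} 1/((κ + iξ)(κ + i(ξ + ξ₁ + ξ₂))(κ - i(ξ + ξ₂))) = ((1 + e^{-κ}) / (1 - e^{-κ})) · 1/((2κ + iξ₁)(2κ - iξ₂)). -/
open Real Complex MeasureTheory Filter

noncomputable def Af (κ : ℝ) (m : ℤ) : ℂ := (κ : ℂ) + Complex.I * (2 * π * m)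

lemma Af_ne (κ : ℝ) (hκ : 0 < κ) (m : ℤ) : Af κ m ≠ 0 := by
  intro h
  have := congrArg Complex.re h
  simp [Af] at this
  linarith

lemma Af_norm_ge (κ : ℝ) (m : ℤ) : 2 * π * |(m:ℝ)| ≤ ‖Af κ m‖ := by
  have h := Complex.abs_im_le_norm (Af κ m)
  have him : (Af κ m).im = 2 * π * m := by simp [Af]
  rw [him] at h
  calc 2 * π * |(m:ℝ)| = |2 * π * (m:ℝ)| := by
        rw [abs_mul, abs_of_pos (by positivity : (0:ℝ) < 2 * π)]
    _ ≤ ‖Af κ m‖ := h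

lemma Af_norm_pos (κ : ℝ) (hκ : 0 < κ) (m : ℤ) : 0 < ‖Af κ m‖ :=
  norm_pos_iff.2 (Af_ne κ hκ m)

/-- workhorse summability lemma -/
lemma summable_inv_prod (κ : ℝ) (hκ : 0 < κ) (ε₁ ε₂ c₁ c₂ : ℤ)
    (hε₁ : ε₁ = 1 ∨ ε₁ = -1) (hε₂ : ε₂ = 1 ∨ ε₂ = -1) :
    Summable (fun n : ℤ => (Af κ (ε₁ * n + c₁) * Af κ (ε₂ * n + c₂))⁻¹) := by
  apply Summable.of_norm_bounded_eventually (g := fun n : ℤ => (1/(π*π)) * (1 / (n:ℝ)^2))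
  · exact (Real.summable_one_div_int_pow.2 one_lt_two).mul_left _
  · have hev : ∀ᶠ n : ℤ in Filter.cofinite,
        2 * (c₁.natAbs + c₂.natAbs) + 1 ≤ n.natAbs := by
      rw [Int.cofinite_eq]
      constructor
      · filter_upwards [eventually_le_atBot (-(2 * ((c₁.natAbs:ℤ) + c₂.natAbs)) - 1)] with n hn
        omega
      · filter_upwards [eventually_ge_atTop (2 * ((c₁.natAbs:ℤ) + c₂.natAbs) + 1)] with n hn
        omega
    filter_upwards [hev] with n hn
    have key : ∀ (ε c : ℤ), ε = 1 ∨ ε = -1 → 2 * c.natAbs + 1 ≤ n.natAbs →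
        π * |(n:ℝ)| ≤ ‖Af κ (ε * n + c)‖ := by
      intro ε c hε hc
      refine le_trans ?_ (Af_norm_ge κ _)
      have h1 : (n.natAbs : ℤ) ≤ 2 * (ε * n + c).natAbs := by
        rcases hε with h | h <;> subst h <;> omega
      have h1' : |(n:ℝ)| ≤ 2 * |((ε * n + c : ℤ) : ℝ)| := by
        have e1 : ((n.natAbs : ℤ) : ℝ) = |(n:ℝ)| := by push_cast [Nat.cast_natAbs]; ring
        have e2 : (((ε * n + c).natAbs : ℤ) : ℝ) = |((ε * n + c : ℤ) : ℝ)| := by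
          push_cast [Nat.cast_natAbs]; ring
        have h1'' : ((n.natAbs : ℤ) : ℝ) ≤ 2 * (((ε * n + c).natAbs : ℤ) : ℝ) := by
          exact_mod_cast h1
        rw [e1, e2] at h1''
        exact h1''
      nlinarith [pi_pos, abs_nonneg ((n:ℝ)), abs_nonneg (((ε * n + c : ℤ) : ℝ))]
    have k1 := key ε₁ c₁ hε₁ (by omega)
    have k2 := key ε₂ c₂ hε₂ (by omega)
    have hn0' : (0:ℝ) < |(n:ℝ)| := by
      have : n ≠ 0 := by omega
      simp [abs_pos, this]
    have hπn : 0 < π * |(n:ℝ)| := by positivity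
    have hprod : 0 < ‖Af κ (ε₁ * n + c₁)‖ * ‖Af κ (ε₂ * n + c₂)‖ :=
      mul_pos (Af_norm_pos κ hκ _) (Af_norm_pos κ hκ _)
    calc ‖(Af κ (ε₁ * n + c₁) * Af κ (ε₂ * n + c₂))⁻¹‖
        = (‖Af κ (ε₁ * n + c₁)‖ * ‖Af κ (ε₂ * n + c₂)‖)⁻¹ := by rw [norm_inv, norm_mul]
      _ ≤ ((π * |(n:ℝ)|) * (π * |(n:ℝ)|))⁻¹ := by
          apply inv_anti₀ (by positivity)
          nlinarith [Af_norm_pos κ hκ (ε₁ * n + c₁)]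
      _ = (1/(π*π)) * (1 / (n:ℝ)^2) := by
          have : (π * |(n:ℝ)|) * (π * |(n:ℝ)|) = (π*π) * (n:ℝ)^2 := by
            rw [mul_mul_mul_comm, abs_mul_abs_self]; ring
          rw [this, mul_inv, one_div, one_div]

lemma Af_apply (κ : ℝ) (m : ℤ) : Af κ m = (κ:ℂ) + Complex.I * (2 * π * m) := rfl

lemma summable_diff (κ : ℝ) (hκ : 0 < κ) (c : ℤ) :
    Summable (fun n : ℤ => (Af κ (n + c))⁻¹ - (Af κ n)⁻¹) := by
  have h := (summable_inv_prod κ hκ 1 1 c 0 (Or.inl rfl) (Or.inl rfl)).mul_left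
    (-(Complex.I * (2 * π * c)))
  simp only [one_mul, add_zero] at h
  refine h.congr fun n => ?_
  rw [inv_sub_inv (Af_ne κ hκ _) (Af_ne κ hκ _),
    show Af κ n - Af κ (n + c) = -(Complex.I * (2 * π * c)) by
      simp only [Af_apply]; push_cast; ring,
    div_eq_mul_inv]

lemma summable_u (κ : ℝ) (hκ : 0 < κ) (c : ℤ) :
    Summable (fun n : ℤ => (Af κ (n + c))⁻¹ + (Af κ (-n))⁻¹) := by
  have h := (summable_inv_prod κ hκ 1 (-1) c 0 (Or.inl rfl) (Or.inr rfl)).mul_left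
    (2 * (κ:ℂ) + Complex.I * (2 * π * c))
  simp only [one_mul, add_zero, neg_one_mul] at h
  refine h.congr fun n => ?_
  rw [inv_add_inv (Af_ne κ hκ _) (Af_ne κ hκ _),
    show Af κ (n + c) + Af κ (-n) = 2 * (κ:ℂ) + Complex.I * (2 * π * c) by
      simp only [Af_apply]; push_cast; ring,
    div_eq_mul_inv]

lemma tendsto_Af_inv_nat (κ : ℝ) (hκ : 0 < κ) :
    Filter.Tendsto (fun N : ℕ => (Af κ N)⁻¹) Filter.atTop (nhds 0) := by
  apply squeeze_zero_norm' (a := fun N : ℕ => (2 * π * N)⁻¹)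
  · filter_upwards [Filter.eventually_ge_atTop 1] with N hN
    rw [norm_inv]
    apply inv_anti₀ (by positivity)
    have := Af_norm_ge κ N
    rwa [_root_.abs_of_nonneg (by positivity : (0:ℝ) ≤ ((N:ℤ):ℝ)), Int.cast_natCast] at this
  · apply Filter.Tendsto.inv_tendsto_atTop
    apply Filter.Tendsto.const_mul_atTop (by positivity : (0:ℝ) < 2 * π)
    exact tendsto_natCast_atTop_atTop

lemma tendsto_Af_inv_neg_nat (κ : ℝ) (hκ : 0 < κ) :
    Filter.Tendsto (fun N : ℕ => (Af κ (-N))⁻¹) Filter.atTop (nhds 0) := by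
  apply squeeze_zero_norm' (a := fun N : ℕ => (2 * π * N)⁻¹)
  · filter_upwards [Filter.eventually_ge_atTop 1] with N hN
    rw [norm_inv]
    apply inv_anti₀ (by positivity)
    have := Af_norm_ge κ (-N)
    rwa [show ((((-N:ℤ)):ℝ)) = -(N:ℝ) by push_cast; ring, abs_neg,
      _root_.abs_of_nonneg (by positivity : (0:ℝ) ≤ (N:ℝ))] at this
  · apply Filter.Tendsto.inv_tendsto_atTop
    apply Filter.Tendsto.const_mul_atTop (by positivity : (0:ℝ) < 2 * π)
    exact tendsto_natCast_atTop_atTop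

lemma phi_one (κ : ℝ) (hκ : 0 < κ) :
    ∑' n : ℤ, ((Af κ (n + 1))⁻¹ - (Af κ n)⁻¹) = 0 := by
  set e : ℤ → ℂ := fun n => (Af κ (n + 1))⁻¹ - (Af κ n)⁻¹ with he_def
  have he : Summable e := summable_diff κ hκ 1
  have hpos : HasSum (fun n : ℕ => e n) (-(Af κ 0)⁻¹) := by
    have hs : Summable (fun n : ℕ => e n) :=
      he.comp_injective (fun a b hab => by exact_mod_cast hab)
    rw [hs.hasSum_iff_tendsto_nat]
    have hps : ∀ N : ℕ, ∑ i ∈ Finset.range N, e i = (Af κ N)⁻¹ - (Af κ 0)⁻¹ := by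
      intro N
      calc ∑ i ∈ Finset.range N, e i
          = ∑ i ∈ Finset.range N, ((Af κ (i+1))⁻¹ - (Af κ (i:ℕ))⁻¹) :=
            Finset.sum_congr rfl (fun i _ => by simp only [he_def]; try norm_cast)
        _ = (Af κ (N:ℕ))⁻¹ - (Af κ ((0:ℕ):ℤ))⁻¹ := Finset.sum_range_sub (fun i : ℕ => (Af κ i)⁻¹) N
        _ = (Af κ N)⁻¹ - (Af κ 0)⁻¹ := by norm_num
    simp_rw [hps]
    simpa using (tendsto_Af_inv_nat κ hκ).sub_const ((Af κ 0)⁻¹)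
  have hneg : HasSum (fun n : ℕ => e (-((n:ℤ) + 1))) ((Af κ 0)⁻¹) := by
    have hs : Summable (fun n : ℕ => e (-(n + 1))) := by
      apply he.comp_injective
      intro a b hab
      simpa using hab
    rw [hs.hasSum_iff_tendsto_nat]
    have hps : ∀ N : ℕ, ∑ i ∈ Finset.range N, e (-((i:ℤ) + 1)) = (Af κ 0)⁻¹ - (Af κ (-N))⁻¹ := by
      intro N
      calc ∑ i ∈ Finset.range N, e (-((i:ℤ) + 1))
          = ∑ i ∈ Finset.range N, ((Af κ (-((i:ℕ):ℤ)))⁻¹ - (Af κ (-(((i+1:ℕ)):ℤ)))⁻¹) :=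
            Finset.sum_congr rfl (fun i _ => by
              simp only [he_def]
              rw [show -((i:ℤ) + 1) + 1 = -(i:ℤ) by ring]
              push_cast
              ring_nf)
        _ = (Af κ (-((0:ℕ):ℤ)))⁻¹ - (Af κ (-((N:ℕ):ℤ)))⁻¹ :=
            Finset.sum_range_sub' (fun i : ℕ => (Af κ (-(i:ℤ)))⁻¹) N
        _ = (Af κ 0)⁻¹ - (Af κ (-N))⁻¹ := by norm_num
    simp_rw [hps]
    simpa using ((tendsto_Af_inv_neg_nat κ hκ).const_sub ((Af κ 0)⁻¹))
  have hfin : HasSum e (-(Af κ 0)⁻¹ + (Af κ 0)⁻¹) := HasSum.of_nat_of_neg_add_one hpos hneg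
  rw [neg_add_cancel] at hfin
  exact hfin.tsum_eq

lemma tsum_shift (f : ℤ → ℂ) (c : ℤ) : ∑' n : ℤ, f (n + c) = ∑' n : ℤ, f n :=
  (Equiv.addRight c).tsum_eq f

lemma summable_shift (f : ℤ → ℂ) (c : ℤ) (hf : Summable f) :
    Summable (fun n : ℤ => f (n + c)) :=
  ((Equiv.addRight c).summable_iff).mpr hf

lemma tsum_shift_sub (f : ℤ → ℂ) (c : ℤ) : ∑' n : ℤ, f (n - c) = ∑' n : ℤ, f n :=
  (Equiv.subRight c).tsum_eq f

lemma summable_shift_sub (f : ℤ → ℂ) (c : ℤ) (hf : Summable f) :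
    Summable (fun n : ℤ => f (n - c)) :=
  ((Equiv.subRight c).summable_iff).mpr hf

lemma phi_zero (κ : ℝ) (hκ : 0 < κ) (c : ℤ) :
    ∑' n : ℤ, ((Af κ (n + c))⁻¹ - (Af κ n)⁻¹) = 0 := by
  induction c using Int.induction_on with
  | zero => simp
  | succ i ih =>
    have key : ∀ n : ℤ, (Af κ (n + (i + 1)))⁻¹ - (Af κ n)⁻¹ =
        ((Af κ (n + 1 + i))⁻¹ - (Af κ (n + 1))⁻¹) + ((Af κ (n + 1))⁻¹ - (Af κ n)⁻¹) := by
      intro n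
      rw [show n + ((i : ℤ) + 1) = (n + 1) + i by ring]
      ring
    have h1 : Summable (fun b : ℤ => (Af κ (b + 1 + i))⁻¹ - (Af κ (b + 1))⁻¹) :=
      summable_shift (fun n => (Af κ (n + i))⁻¹ - (Af κ n)⁻¹) 1 (summable_diff κ hκ i)
    have h2 : Summable (fun b : ℤ => (Af κ (b + 1))⁻¹ - (Af κ b)⁻¹) := summable_diff κ hκ 1
    have hA : ∑' (b : ℤ), ((Af κ (b + 1 + i))⁻¹ - (Af κ (b + 1))⁻¹)
        = ∑' (b : ℤ), ((Af κ (b + i))⁻¹ - (Af κ b)⁻¹) :=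
      tsum_shift (fun n => (Af κ (n + i))⁻¹ - (Af κ n)⁻¹) 1
    rw [tsum_congr key, Summable.tsum_add h1 h2, hA, ih, phi_one κ hκ, add_zero]
  | pred i ih =>
    have key : ∀ n : ℤ, (Af κ (n + (-i - 1)))⁻¹ - (Af κ n)⁻¹ =
        ((Af κ (n - 1 + -i))⁻¹ - (Af κ (n - 1))⁻¹) - ((Af κ (n - 1 + 1))⁻¹ - (Af κ (n - 1))⁻¹) := by
      intro n
      rw [show n + (-(i:ℤ) - 1) = (n - 1) + -(i:ℤ) by ring, show (n - 1) + 1 = n by ring]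
      ring
    have h1 : Summable (fun b : ℤ => (Af κ (b - 1 + -i))⁻¹ - (Af κ (b - 1))⁻¹) :=
      summable_shift_sub (fun n => (Af κ (n + -i))⁻¹ - (Af κ n)⁻¹) 1 (summable_diff κ hκ (-i))
    have h2 : Summable (fun b : ℤ => (Af κ (b - 1 + 1))⁻¹ - (Af κ (b - 1))⁻¹) :=
      summable_shift_sub (fun n => (Af κ (n + 1))⁻¹ - (Af κ n)⁻¹) 1 (summable_diff κ hκ 1)
    have hA : ∑' (b : ℤ), ((Af κ (b - 1 + -i))⁻¹ - (Af κ (b - 1))⁻¹)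
        = ∑' (b : ℤ), ((Af κ (b + -i))⁻¹ - (Af κ b)⁻¹) :=
      tsum_shift_sub (fun n => (Af κ (n + -i))⁻¹ - (Af κ n)⁻¹) 1
    have hB : ∑' (b : ℤ), ((Af κ (b - 1 + 1))⁻¹ - (Af κ (b - 1))⁻¹)
        = ∑' (b : ℤ), ((Af κ (b + 1))⁻¹ - (Af κ b)⁻¹) :=
      tsum_shift_sub (fun n => (Af κ (n + 1))⁻¹ - (Af κ n)⁻¹) 1
    rw [tsum_congr key, Summable.tsum_sub h1 h2, hA, hB, ih, phi_one κ hκ, sub_zero]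

lemma exp_neg_lt_one (κ : ℝ) (hκ : 0 < κ) : Real.exp (-κ) < 1 := by
  rw [Real.exp_lt_one_iff]; linarith

lemma parseval_S (κ : ℝ) (hκ : 0 < κ) :
    (1 - Real.exp (-κ))^2 * ∑' n : ℤ, (κ^2 + (2*π*n)^2)⁻¹
      = (1 - Real.exp (-2*κ)) / (2*κ) := by
  haveI : Fact (0 < (1:ℝ)) := ⟨one_pos⟩
  set f : ℝ → ℂ := fun x => Complex.exp (-(κ:ℂ) * x) with hf_def
  set g : AddCircle 1 → ℂ := AddCircle.liftIoc 1 0 f with hg_def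
  have hfc : Continuous f := Complex.continuous_exp.comp (continuous_const.mul Complex.continuous_ofReal)
  have hgm : Measurable g := by
    have h1 : Measurable (⇑(AddCircle.measurableEquivIoc (1:ℝ) 0)) :=
      (AddCircle.measurableEquivIoc 1 0).measurable
    exact ((hfc.measurable).comp measurable_subtype_coe).comp h1
  have hb : ∀ x : AddCircle 1, ‖g x‖ ≤ 1 := by
    intro x
    have hy : 0 < ((AddCircle.equivIoc 1 0 x : ℝ)) := ((AddCircle.equivIoc 1 0) x).2.1
    show ‖f ((AddCircle.equivIoc 1 0 x : ℝ))‖ ≤ 1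
    simp only [hf_def, Complex.norm_exp]
    rw [Real.exp_le_one_iff]
    have : (-(κ:ℂ) * ((AddCircle.equivIoc 1 0 x : ℝ) : ℂ)).re
        = -κ * (AddCircle.equivIoc 1 0 x : ℝ) := by
      simp [← Complex.ofReal_neg, ← Complex.ofReal_mul]
    rw [this]
    nlinarith
  have hmem : MeasureTheory.MemLp g 2 AddCircle.haarAddCircle :=
    MeasureTheory.MemLp.of_bound hgm.aestronglyMeasurable 1 (Filter.Eventually.of_forall hb)
  set F := hmem.toLp g with hF_def
  have hFg : (⇑F : AddCircle (1:ℝ) → ℂ) =ᵐ[AddCircle.haarAddCircle] g := hmem.coeFn_toLp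
  have hcoeff : ∀ n : ℤ, fourierCoeff (⇑F : AddCircle (1:ℝ) → ℂ) n = fourierCoeff g n := by
    intro n
    unfold fourierCoeff
    apply MeasureTheory.integral_congr_ae
    filter_upwards [hFg] with t ht
    rw [ht]
  have hgcoeff : ∀ n : ℤ, fourierCoeff g n = ((1 - Real.exp (-κ) : ℝ) : ℂ) / Af κ n := by
    intro n
    rw [hg_def, fourierCoeff_liftIoc_eq, fourierCoeffOn_eq_integral]
    have hint : ∫ x in (0:ℝ)..(0+1), (fourier (-n) (x : AddCircle ((0:ℝ)+1-0)) : ℂ) • f x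
        = ∫ x in (0:ℝ)..1, Complex.exp ((-(Af κ n)) * x) := by
      rw [show (0:ℝ)+1 = 1 by norm_num]
      apply intervalIntegral.integral_congr
      intro x _
      simp only [fourier_coe_apply, smul_eq_mul, hf_def, Af_apply]
      rw [← Complex.exp_add]
      congr 1
      push_cast
      field_simp
      ring
    rw [hint, integral_exp_mul_complex (by
      simpa using (neg_ne_zero.mpr (Af_ne κ hκ n)))]
    have h1 : Complex.exp (-(Af κ n) * ((1:ℝ):ℂ)) = ((Real.exp (-κ) : ℝ) : ℂ) := by
      rw [Af_apply, show -((κ:ℂ) + Complex.I * (2*π*(n:ℂ))) * ((1:ℝ):ℂ)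
          = -(κ:ℂ) + ((-n : ℤ) : ℂ) * (2*(π:ℂ)*Complex.I) by push_cast; ring,
        Complex.exp_add, Complex.exp_int_mul_two_pi_mul_I, mul_one, Complex.ofReal_exp,
        Complex.ofReal_neg]
    have h0 : Complex.exp (-(Af κ n) * ((0:ℝ):ℂ)) = 1 := by
      simp
    rw [h1, h0]
    have hAne := Af_ne κ hκ n
    rw [show (0:ℝ) + 1 - 0 = 1 by norm_num, one_div_one, one_smul]
    push_cast
    field_simp
    ring
  have hnorm : ∀ n : ℤ, ‖fourierCoeff (⇑F : AddCircle (1:ℝ) → ℂ) n‖^2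
      = (1 - Real.exp (-κ))^2 * (κ^2 + (2*π*n)^2)⁻¹ := by
    intro n
    rw [hcoeff n, hgcoeff n, norm_div, div_pow]
    have h1 : ‖((1 - Real.exp (-κ) : ℝ) : ℂ)‖ = 1 - Real.exp (-κ) := by
      rw [Complex.norm_real]
      exact _root_.abs_of_nonneg (by linarith [exp_neg_lt_one κ hκ])
    have h2 : ‖Af κ n‖^2 = κ^2 + (2*π*n)^2 := by
      rw [Complex.sq_norm, Complex.normSq_apply]
      have hre : (Af κ n).re = κ := by simp [Af_apply]
      have him : (Af κ n).im = 2*π*n := by simp [Af_apply]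
      rw [hre, him]
      ring
    rw [h1, h2, div_eq_mul_inv]
  have hpars := tsum_sq_fourierCoeff F
  rw [tsum_congr hnorm] at hpars
  rw [tsum_mul_left] at hpars
  rw [hpars]
  -- now compute the integral
  have hint2 : ∫ t : AddCircle 1, ‖(⇑F : AddCircle (1:ℝ) → ℂ) t‖^2 ∂AddCircle.haarAddCircle
      = ∫ x in Set.Ioc (0:ℝ) (0+1), ‖g (x : AddCircle (1:ℝ))‖^2 := by
    rw [MeasureTheory.integral_congr_ae (hFg.mono fun t ht => by rw [ht])]
    have hv2 : ∫ t : AddCircle 1, ‖g t‖^2 = ∫ t : AddCircle 1, ‖g t‖^2 ∂AddCircle.haarAddCircle := by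
      rw [AddCircle.volume_eq_smul_haarAddCircle, MeasureTheory.integral_smul_measure]
      simp
    rw [← hv2]
    exact (AddCircle.integral_preimage 1 0 (fun t => ‖g t‖^2)).symm
  rw [hint2]
  have hint3 : ∫ x in Set.Ioc (0:ℝ) (0+1), ‖g (x : AddCircle (1:ℝ))‖^2
      = ∫ x in (0:ℝ)..1, Real.exp (-(2*κ)*x) := by
    rw [show (0:ℝ)+1 = 1 by norm_num, intervalIntegral.integral_of_le (by norm_num : (0:ℝ) ≤ 1)]
    apply MeasureTheory.setIntegral_congr_fun measurableSet_Ioc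
    intro x hx
    show ‖g (x : AddCircle (1:ℝ))‖^2 = Real.exp (-(2*κ)*x)
    have : g (x : AddCircle (1:ℝ)) = f x := AddCircle.liftIoc_coe_apply (by simpa using hx)
    rw [this]
    simp only [hf_def, Complex.norm_exp]
    rw [show (-(κ:ℂ) * (x:ℂ)).re = -κ * x by
      simp [← Complex.ofReal_neg, ← Complex.ofReal_mul]]
    rw [← Real.exp_nat_mul]
    norm_num
    ring_nf
  rw [hint3]
  have hderiv : ∀ x : ℝ, HasDerivAt (fun y => -(1/(2*κ)) * Real.exp (-(2*κ)*y))
      (Real.exp (-(2*κ)*x)) x := by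
    intro x
    have h1 : HasDerivAt (fun y : ℝ => -(2*κ)*y) (-(2*κ)) x := by
      simpa using (hasDerivAt_id x).const_mul (-(2*κ))
    have h2 := (Real.hasDerivAt_exp (-(2*κ)*x)).comp x h1
    have h3 := h2.const_mul (-(1/(2*κ)))
    refine h3.congr_deriv ?_
    have hκ0 : κ ≠ 0 := hκ.ne'
    field_simp
  rw [intervalIntegral.integral_eq_sub_of_hasDerivAt (fun x _ => hderiv x)
    ((Real.continuous_exp.comp (continuous_const.mul continuous_id)).intervalIntegrable 0 1)]
  field_simp
  rw [mul_zero, neg_zero, Real.exp_zero]; ring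

lemma sum_u_zero (κ : ℝ) (hκ : 0 < κ) :
    ∑' n : ℤ, ((Af κ n)⁻¹ + (Af κ (-n))⁻¹)
      = (((1 + Real.exp (-κ)) / (1 - Real.exp (-κ)) : ℝ) : ℂ) := by
  have hpt : ∀ n : ℤ, (Af κ n)⁻¹ + (Af κ (-n))⁻¹
      = ((2*κ * (κ^2 + (2*π*n)^2)⁻¹ : ℝ) : ℂ) := by
    intro n
    rw [inv_add_inv (Af_ne κ hκ n) (Af_ne κ hκ (-n))]
    have hnum : Af κ n + Af κ (-n) = ((2*κ : ℝ) : ℂ) := by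
      simp only [Af_apply]; push_cast; ring
    have hden : Af κ n * Af κ (-n) = (((κ^2 + (2*π*n)^2 : ℝ)) : ℂ) := by
      simp only [Af_apply]
      push_cast
      ring_nf
      rw [Complex.I_sq]
      ring
    rw [hnum, hden]
    push_cast
    rw [div_eq_mul_inv]
  rw [tsum_congr hpt, ← Complex.ofReal_tsum]
  congr 1
  rw [tsum_mul_left]
  have hP := parseval_S κ hκ
  have h1 : 1 - Real.exp (-κ) ≠ 0 := by have := exp_neg_lt_one κ hκ; linarith
  have hsq : (1 - Real.exp (-κ))^2 ≠ 0 := pow_ne_zero 2 h1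
  have h2 : Real.exp (-2*κ) = Real.exp (-κ) * Real.exp (-κ) := by
    rw [← Real.exp_add]; ring_nf
  have hS : ∑' n : ℤ, (κ^2 + (2*π*n)^2)⁻¹
      = (1 - Real.exp (-2*κ)) / (2*κ) / (1 - Real.exp (-κ))^2 := by
    rw [← hP, mul_comm ((1 - Real.exp (-κ))^2) _, mul_div_assoc, div_self hsq, mul_one]
  rw [hS, h2]
  have hκ' : (2*κ) ≠ 0 := by positivity
  field_simp
  ring

lemma sum_u (κ : ℝ) (hκ : 0 < κ) (c : ℤ) :
    ∑' n : ℤ, ((Af κ (n + c))⁻¹ + (Af κ (-n))⁻¹)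
      = (((1 + Real.exp (-κ)) / (1 - Real.exp (-κ)) : ℝ) : ℂ) := by
  have hpt : ∀ n : ℤ, (Af κ (n + c))⁻¹ + (Af κ (-n))⁻¹
      = ((Af κ (n + c))⁻¹ - (Af κ n)⁻¹) + ((Af κ n)⁻¹ + (Af κ (-n))⁻¹) := fun n => by ring
  have hu0 : Summable (fun n : ℤ => (Af κ n)⁻¹ + (Af κ (-n))⁻¹) :=
    (summable_u κ hκ 0).congr (fun n => by rw [add_zero])
  rw [tsum_congr hpt, Summable.tsum_add (summable_diff κ hκ c) hu0, phi_zero κ hκ c, zero_add,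
    sum_u_zero κ hκ]

lemma pf_final (T t d e : ℂ) (ht : t ≠ 0) (hd : d ≠ 0) (he : e ≠ 0) (hde : d + t = e) :
    (t * d)⁻¹ * T - (t * e)⁻¹ * T = T * (1 / (e * d)) := by
  have h : e = d + t := hde.symm
  subst h
  field_simp
  ring

lemma pf_id (A t d : ℂ) (hA : A ≠ 0) (hB : A + t ≠ 0) (hC : d - A ≠ 0) (ht : t ≠ 0)
    (hd : d ≠ 0) (hdt : d + t ≠ 0) :
    1 / (A * (A + t) * (d - A))
      = (t * d)⁻¹ * (A⁻¹ + (d - A)⁻¹) - (t * (d + t))⁻¹ * ((A + t)⁻¹ + (d - A)⁻¹) := by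
  field_simp
  ring

/-- Let `κ > 0` and `ξ₁, ξ₂ ∈ 2πℤ` with `ξ₁ + ξ₂ ≠ 0`. Then
`∑_{ξ∈2πℤ} 1/((κ + iξ)(κ + i(ξ+ξ₁+ξ₂))(κ - i(ξ+ξ₂)))
  = ((1 + e^{-κ})/(1 - e^{-κ})) ⬝ 1/((2κ + iξ₁)(2κ - iξ₂))`. -/
theorem stmt_5 (κ : ℝ) (hκ : 0 < κ) (ξ₁ ξ₂ : ℝ)
    (h₁ : ∃ a : ℤ, ξ₁ = 2 * π * a) (h₂ : ∃ b : ℤ, ξ₂ = 2 * π * b)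
    (hne : ξ₁ + ξ₂ ≠ 0) :
    (∑' n : ℤ, 1 / (((κ : ℂ) + Complex.I * (2 * π * n)) *
        ((κ : ℂ) + Complex.I * (2 * π * n + ξ₁ + ξ₂)) *
        ((κ : ℂ) - Complex.I * (2 * π * n + ξ₂))))
      = (((1 + Real.exp (-κ)) / (1 - Real.exp (-κ)) : ℝ) : ℂ) *
          (1 / ((2 * (κ : ℂ) + Complex.I * ξ₁) * (2 * (κ : ℂ) - Complex.I * ξ₂))) := by
  obtain ⟨a, ha⟩ := h₁
  obtain ⟨b, hb⟩ := h₂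
  set t : ℂ := Complex.I * ((ξ₁ : ℂ) + ξ₂) with ht_def
  set d : ℂ := 2 * (κ : ℂ) - Complex.I * ξ₂ with hd_def
  set e : ℂ := 2 * (κ : ℂ) + Complex.I * ξ₁ with he_def
  have ht : t ≠ 0 := by
    rw [ht_def]
    apply mul_ne_zero Complex.I_ne_zero
    rw [show ((ξ₁ : ℂ) + ξ₂) = ((ξ₁ + ξ₂ : ℝ) : ℂ) by push_cast; ring]
    exact_mod_cast hne
  have hd : d ≠ 0 := by
    rw [hd_def]
    intro h
    have := congrArg Complex.re h
    simp at this
    linarith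
  have he : e ≠ 0 := by
    rw [he_def]
    intro h
    have := congrArg Complex.re h
    simp at this
    linarith
  have hde : d + t = e := by rw [hd_def, ht_def, he_def]; ring
  have key : ∀ n : ℤ, 1 / (((κ : ℂ) + Complex.I * (2 * π * n)) *
        ((κ : ℂ) + Complex.I * (2 * π * n + ξ₁ + ξ₂)) *
        ((κ : ℂ) - Complex.I * (2 * π * n + ξ₂)))
      = (t * d)⁻¹ * ((Af κ (n + b + -b))⁻¹ + (Af κ (-(n + b)))⁻¹)
        - (t * e)⁻¹ * ((Af κ (n + b + a))⁻¹ + (Af κ (-(n + b)))⁻¹) := by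
    intro n
    have hAB : Af κ n + t = Af κ (n + b + a) := by
      rw [ht_def]; simp only [Af_apply]; rw [ha, hb]; push_cast; ring
    have hCA : d - Af κ n = Af κ (-(n + b)) := by
      rw [hd_def]; simp only [Af_apply]; rw [hb]; push_cast; ring
    have h := pf_id (Af κ n) t d (Af_ne κ hκ n)
      (by rw [hAB]; exact Af_ne κ hκ _)
      (by rw [hCA]; exact Af_ne κ hκ _) ht hd (by rw [hde]; exact he)
    rw [hAB, hCA, hde] at h
    have f1 : ((κ : ℂ) + Complex.I * (2 * π * n)) = Af κ n := (Af_apply κ n).symm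
    have f2 : ((κ : ℂ) + Complex.I * (2 * π * n + ξ₁ + ξ₂)) = Af κ (n + b + a) := by
      rw [← hAB, ht_def, Af_apply]; push_cast; ring
    have f3 : ((κ : ℂ) - Complex.I * (2 * π * n + ξ₂)) = Af κ (-(n + b)) := by
      rw [← hCA, hd_def, Af_apply]; push_cast; ring
    rw [show n + b + -b = n by ring, f1, f2, f3, h]
  have hs1 : Summable (fun n : ℤ => (t * d)⁻¹ * ((Af κ (n + b + -b))⁻¹ + (Af κ (-(n + b)))⁻¹)) :=
    (summable_shift (fun m => (Af κ (m + -b))⁻¹ + (Af κ (-m))⁻¹) b (summable_u κ hκ (-b))).mul_left _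
  have hs2 : Summable (fun n : ℤ => (t * e)⁻¹ * ((Af κ (n + b + a))⁻¹ + (Af κ (-(n + b)))⁻¹)) :=
    (summable_shift (fun m => (Af κ (m + a))⁻¹ + (Af κ (-m))⁻¹) b (summable_u κ hκ a)).mul_left _
  rw [tsum_congr key, Summable.tsum_sub hs1 hs2, tsum_mul_left, tsum_mul_left,
    tsum_shift (fun m => (Af κ (m + -b))⁻¹ + (Af κ (-m))⁻¹) b,
    tsum_shift (fun m => (Af κ (m + a))⁻¹ + (Af κ (-m))⁻¹) b,
    sum_u κ hκ (-b), sum_u κ hκ a]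
  exact pf_final _ t d e ht hd he hde
end

section
/- Let -1 < s < 1. There exists a constant C = C(s) > 0 such that for every real κ ≥ 1 and every ξ ∈ ℝ, ∑_{k=1}^∞ (κ 2^k)^{2s} w(ξ; κ 2^k) ≤ C (1 + ξ²)^s. -/
open Real

/-- The multiplier `w(ξ; m) = 3m²ξ² / (4(ξ² + m²)(ξ² + 4m²))`. -/
noncomputable def w (ξ m : ℝ) : ℝ :=
  3 * m ^ 2 * ξ ^ 2 / (4 * (ξ ^ 2 + m ^ 2) * (ξ ^ 2 + 4 * m ^ 2))

lemma w_nonneg (ξ m : ℝ) : 0 ≤ w ξ m := by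
  unfold w; positivity

lemma w_le_A (ξ m : ℝ) (hm : 0 < m) : w ξ m ≤ 3 / 16 * ξ ^ 2 / m ^ 2 := by
  unfold w
  rw [div_le_div_iff₀ (by positivity) (by positivity)]
  nlinarith [sq_nonneg ξ, sq_nonneg m, sq_nonneg (ξ * m), sq_nonneg (ξ ^ 2), pow_pos hm 2,
    mul_pos (pow_pos hm 2) (pow_pos hm 2), sq_nonneg (ξ ^ 2 * m)]

lemma w_le_B (ξ m : ℝ) (hξ : 0 < ξ ^ 2) : w ξ m ≤ 3 / 4 * m ^ 2 / ξ ^ 2 := by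
  unfold w
  rw [div_le_div_iff₀ (by positivity) (by positivity)]
  nlinarith [sq_nonneg ξ, sq_nonneg m, sq_nonneg (ξ * m), mul_pos hξ hξ, sq_nonneg (ξ ^ 2),
    mul_nonneg (sq_nonneg m) (sq_nonneg (ξ * m)), mul_nonneg (sq_nonneg m) (sq_nonneg (m * m))]

lemma aux_pow_rpow (a : ℝ) (ha : 0 ≤ a) (k : ℕ) (t : ℝ) :
    ((a ^ k : ℝ)) ^ t = (a ^ t) ^ k := by
  rw [← Real.rpow_natCast a k, ← Real.rpow_mul ha, mul_comm, Real.rpow_mul ha,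
    Real.rpow_natCast]

lemma rpow_comp {s x y : ℝ} (hs1 : -1 ≤ s) (hs2 : s ≤ 1) (hx : 0 < x) (hy : 0 < y)
    (h1 : x ≤ 4 * y) (h2 : y ≤ 4 * x) : x ^ s ≤ 4 * y ^ s := by
  rcases le_or_gt 0 s with h | h
  · calc x ^ s ≤ (4 * y) ^ s := Real.rpow_le_rpow hx.le h1 h
      _ = 4 ^ s * y ^ s := Real.mul_rpow (by norm_num) hy.le
      _ ≤ 4 * y ^ s := by
          have h4 : (4:ℝ) ^ s ≤ (4:ℝ) ^ (1:ℝ) :=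
            Real.rpow_le_rpow_of_exponent_le (by norm_num) hs2
          rw [Real.rpow_one] at h4
          exact mul_le_mul_of_nonneg_right h4 (Real.rpow_nonneg hy.le s)
  · have h4 : y / 4 ≤ x := by linarith
    calc x ^ s ≤ (y / 4) ^ s := Real.rpow_le_rpow_of_nonpos (by positivity) h4 h.le
      _ = y ^ s / 4 ^ s := Real.div_rpow hy.le (by norm_num) s
      _ = y ^ s * 4 ^ (-s) := by rw [Real.rpow_neg (by norm_num), div_eq_mul_inv]
      _ ≤ y ^ s * 4 := by
          have h5 : (4:ℝ) ^ (-s) ≤ (4:ℝ) ^ (1:ℝ) :=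
            Real.rpow_le_rpow_of_exponent_le (by norm_num) (by linarith)
          rw [Real.rpow_one] at h5
          exact mul_le_mul_of_nonneg_left h5 (Real.rpow_nonneg hy.le s)
      _ = 4 * y ^ s := mul_comm _ _

set_option maxHeartbeats 2000000 in
/-- Let `-1 < s < 1`. There exists `C = C(s) > 0` such that for every real
`κ ≥ 1` and every `ξ ∈ ℝ`, `∑_{k=1}^∞ (κ 2^k)^{2s} w(ξ; κ 2^k) ≤ C (1 + ξ²)^s`. -/
theorem stmt_9 (s : ℝ) (hs₁ : -1 < s) (hs₂ : s < 1) :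
    ∃ C : ℝ, 0 < C ∧ ∀ κ : ℝ, 1 ≤ κ → ∀ ξ : ℝ,
      (∑' k : ℕ, (κ * 2 ^ (k + 1)) ^ (2 * s) * w ξ (κ * 2 ^ (k + 1)))
        ≤ C * (1 + ξ ^ 2) ^ s := by
  set ρ : ℝ := (4:ℝ) ^ (s - 1) with hρdef
  set q : ℝ := (4:ℝ) ^ (s + 1) with hqdef
  have hρ0 : (0:ℝ) ≤ ρ := Real.rpow_nonneg (by norm_num) _
  have hρ1 : ρ < 1 := Real.rpow_lt_one_of_one_lt_of_neg (by norm_num) (by linarith)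
  have hq1 : 1 < q := by
    have : (4:ℝ) ^ (0:ℝ) < (4:ℝ) ^ (s + 1) :=
      Real.rpow_lt_rpow_of_exponent_lt (by norm_num) (by linarith)
    rwa [Real.rpow_zero] at this
  have hD : 0 < 1 - ρ := by linarith
  have hA : 0 < (1 - ρ)⁻¹ := by positivity
  have hB : 0 < (q - 1)⁻¹ := by
    have : 0 < q - 1 := by linarith
    positivity
  refine ⟨12 * (1 - ρ)⁻¹ + 3 * q * (q - 1)⁻¹, by positivity, ?_⟩
  intro κ hκ ξ
  set C : ℝ := 12 * (1 - ρ)⁻¹ + 3 * q * (q - 1)⁻¹ with hCdef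
  have hCpos : 0 < C := by positivity
  set r : ℝ := ξ ^ 2 with hr
  set u0 : ℝ := 4 * κ ^ 2 with hu0
  have hu0_4 : (4:ℝ) ≤ u0 := by nlinarith
  have hu0pos : (0:ℝ) < u0 := by nlinarith
  set F : ℕ → ℝ := fun k => (κ * 2 ^ (k + 1)) ^ (2 * s) * w ξ (κ * 2 ^ (k + 1)) with hF
  have hm : ∀ k : ℕ, (0:ℝ) < κ * 2 ^ (k + 1) := fun k => by positivity
  have hmsq : ∀ k : ℕ, (κ * 2 ^ (k + 1)) ^ 2 = u0 * 4 ^ k := by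
    intro k
    have h2 : ((2:ℝ) ^ (k + 1)) ^ 2 = 4 * 4 ^ k := by
      rw [← pow_mul, mul_comm (k+1) 2, pow_mul]
      norm_num [pow_succ]
      ring
    rw [mul_pow, h2, hu0]
    ring
  have huk : ∀ k : ℕ, (0:ℝ) < u0 * 4 ^ k := fun k => by positivity
  have hFk : ∀ k, F k = (u0 * 4 ^ k) ^ s * w ξ (κ * 2 ^ (k + 1)) := by
    intro k
    rw [hF]
    simp only
    congr 1
    rw [← hmsq k, show (2 * s) = ((2:ℕ):ℝ) * s by norm_num,
      Real.rpow_mul (hm k).le, Real.rpow_natCast]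
  have hFnonneg : ∀ k, 0 ≤ F k := by
    intro k
    rw [hFk k]
    exact mul_nonneg (Real.rpow_nonneg (huk k).le s) (w_nonneg _ _)
  have hFA : ∀ k, F k ≤ (3 / 16 * r * u0 ^ (s - 1)) * ρ ^ k := by
    intro k
    rw [hFk k]
    have h1 : w ξ (κ * 2 ^ (k + 1)) ≤ 3 / 16 * r / (u0 * 4 ^ k) := by
      have := w_le_A ξ (κ * 2 ^ (k + 1)) (hm k)
      rwa [hmsq k] at this
    calc (u0 * 4 ^ k) ^ s * w ξ (κ * 2 ^ (k + 1))
        ≤ (u0 * 4 ^ k) ^ s * (3 / 16 * r / (u0 * 4 ^ k)) :=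
          mul_le_mul_of_nonneg_left h1 (Real.rpow_nonneg (huk k).le s)
      _ = 3 / 16 * r * ((u0 * 4 ^ k) ^ s / (u0 * 4 ^ k) ^ (1:ℝ)) := by
          rw [Real.rpow_one]; ring
      _ = 3 / 16 * r * (u0 * 4 ^ k) ^ (s - 1) := by
          rw [← Real.rpow_sub (huk k)]
      _ = (3 / 16 * r * u0 ^ (s - 1)) * ρ ^ k := by
          rw [Real.mul_rpow hu0pos.le (by positivity), aux_pow_rpow 4 (by norm_num) k (s - 1)]
          ring
  have hgeoS : Summable (fun k : ℕ => (3 / 16 * r * u0 ^ (s - 1)) * ρ ^ k) :=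
    (summable_geometric_of_lt_one hρ0 hρ1).mul_left _
  have hsum : Summable F := Summable.of_nonneg_of_le hFnonneg hFA hgeoS
  have hrs_pos : 0 ≤ r := sq_nonneg ξ
  rcases hrs_pos.eq_or_lt with h0 | hrpos
  · -- ξ = 0
    have hF0 : ∀ k, F k = 0 := by
      intro k
      rw [hFk k]
      unfold w
      rw [hr] at h0
      rw [← h0]
      simp
    rw [show (∑' k, F k) = 0 by rw [tsum_congr hF0]; exact tsum_zero]
    positivity
  · -- main case
    have hfin : (∑' k, F k) ≤ C * (1 + r) ^ s → (∑' k, F k) ≤ C * (1 + ξ ^ 2) ^ s := by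
      intro h; exact h
    apply hfin
    have hP : (0:ℝ) < (1 + r) ^ s := Real.rpow_pos_of_pos (by positivity) s
    rcases le_or_gt r u0 with hr_le | hr_gt
    · -- small frequency case
      have h1 : (∑' k, F k) ≤ (3 / 16 * r * u0 ^ (s - 1)) * (1 - ρ)⁻¹ := by
        calc (∑' k, F k) ≤ ∑' k, (3 / 16 * r * u0 ^ (s - 1)) * ρ ^ k :=
              Summable.tsum_le_tsum hFA hsum hgeoS
          _ = (3 / 16 * r * u0 ^ (s - 1)) * (1 - ρ)⁻¹ := by
              rw [tsum_mul_left, tsum_geometric_of_lt_one hρ0 hρ1]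
      set M : ℝ := max 4 r with hM
      have hM4 : (4:ℝ) ≤ M := le_max_left _ _
      have hMr : r ≤ M := le_max_right _ _
      have hMpos : (0:ℝ) < M := by linarith
      have hu0M : M ≤ u0 := max_le hu0_4 hr_le
      have h2 : r * u0 ^ (s - 1) ≤ M ^ s := by
        calc r * u0 ^ (s - 1) ≤ M * M ^ (s - 1) :=
              mul_le_mul hMr (Real.rpow_le_rpow_of_nonpos hMpos hu0M (by linarith))
                (Real.rpow_nonneg hu0pos.le _) hMpos.le
          _ = M ^ s := by
              rw [mul_comm, ← Real.rpow_add_one hMpos.ne']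
              congr 1; ring
      have h3 : M ^ s ≤ 4 * (1 + r) ^ s := by
        apply rpow_comp hs₁.le hs₂.le hMpos (by positivity)
        · exact max_le (by linarith) (by linarith)
        · have : (1:ℝ) ≤ M := by linarith
          nlinarith
      calc (∑' k, F k) ≤ (3 / 16 * r * u0 ^ (s - 1)) * (1 - ρ)⁻¹ := h1
        _ ≤ (3 / 16 * (4 * (1 + r) ^ s)) * (1 - ρ)⁻¹ := by
            apply mul_le_mul_of_nonneg_right _ hA.le
            have := le_trans h2 h3
            linarith
        _ ≤ C * (1 + r) ^ s := by
            rw [hCdef]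
            nlinarith [mul_pos hB (mul_pos (lt_trans one_pos hq1) hP), mul_pos hA hP]
    · -- large frequency case
      obtain ⟨n, hn1, hn3⟩ : ∃ n : ℕ, r ≤ u0 * 4 ^ n ∧ u0 * 4 ^ n < 4 * r := by
        have hex : ∃ n : ℕ, r ≤ u0 * 4 ^ n := by
          obtain ⟨n, hn⟩ := pow_unbounded_of_one_lt (r / u0) (show (1:ℝ) < 4 by norm_num)
          refine ⟨n, ?_⟩
          rw [div_lt_iff₀ hu0pos] at hn
          nlinarith
        have hn1 : r ≤ u0 * 4 ^ (Nat.find hex) := Nat.find_spec hex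
        refine ⟨Nat.find hex, hn1, ?_⟩
        have hnne : Nat.find hex ≠ 0 := by
          intro h
          rw [h] at hn1
          simp at hn1
          linarith
        have hn2 : u0 * 4 ^ (Nat.find hex - 1) < r := by
          have h := Nat.find_min hex
            (show Nat.find hex - 1 < Nat.find hex from
              Nat.sub_lt (Nat.pos_of_ne_zero hnne) one_pos)
          exact lt_of_not_ge h
        have heq : u0 * 4 ^ (Nat.find hex) = 4 * (u0 * 4 ^ (Nat.find hex - 1)) := by
          obtain ⟨m, hmm⟩ : ∃ m, Nat.find hex = m + 1 :=
            ⟨Nat.find hex - 1, (Nat.succ_pred_eq_of_pos (Nat.pos_of_ne_zero hnne)).symm⟩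
          rw [hmm, Nat.add_sub_cancel, pow_succ]
          ring
        linarith
      have hFB : ∀ k, F k ≤ (3 / 4 * u0 ^ (s + 1) / r) * q ^ k := by
        intro k
        rw [hFk k]
        have h1 : w ξ (κ * 2 ^ (k + 1)) ≤ 3 / 4 * (u0 * 4 ^ k) / r := by
          have := w_le_B ξ (κ * 2 ^ (k + 1)) hrpos
          rwa [hmsq k] at this
        calc (u0 * 4 ^ k) ^ s * w ξ (κ * 2 ^ (k + 1))
            ≤ (u0 * 4 ^ k) ^ s * (3 / 4 * (u0 * 4 ^ k) / r) :=
              mul_le_mul_of_nonneg_left h1 (Real.rpow_nonneg (huk k).le s)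
          _ = 3 / 4 * ((u0 * 4 ^ k) ^ s * (u0 * 4 ^ k)) / r := by ring
          _ = 3 / 4 * (u0 * 4 ^ k) ^ (s + 1) / r := by
              rw [Real.rpow_add_one (huk k).ne']
          _ = (3 / 4 * u0 ^ (s + 1) / r) * q ^ k := by
              rw [Real.mul_rpow hu0pos.le (by positivity), aux_pow_rpow 4 (by norm_num) k (s + 1)]
              ring
      rw [← Summable.sum_add_tsum_nat_add n hsum]
      -- head bound
      have hqn : u0 ^ (s + 1) * q ^ n = (u0 * 4 ^ n) ^ (s + 1) := by
        rw [Real.mul_rpow hu0pos.le (by positivity), aux_pow_rpow 4 (by norm_num) n (s + 1)]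
      have hle : (u0 * 4 ^ n) ^ (s + 1) ≤ q * (r ^ s * r) := by
        calc (u0 * 4 ^ n) ^ (s + 1) ≤ (4 * r) ^ (s + 1) :=
              Real.rpow_le_rpow (huk n).le hn3.le (by linarith)
          _ = 4 ^ (s + 1) * r ^ (s + 1) := Real.mul_rpow (by norm_num) hrpos.le
          _ = q * (r ^ s * r) := by rw [Real.rpow_add_one hrpos.ne' s]
      have hhead : ∑ i ∈ Finset.range n, F i ≤ 3 / 4 * q * (q - 1)⁻¹ * r ^ s := by
        have step1 : ∑ i ∈ Finset.range n, F i
            ≤ ∑ i ∈ Finset.range n, (3 / 4 * u0 ^ (s + 1) / r) * q ^ i :=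
          Finset.sum_le_sum fun i _ => hFB i
        have step2 : ∑ i ∈ Finset.range n, (3 / 4 * u0 ^ (s + 1) / r) * q ^ i
            = (3 / 4 * u0 ^ (s + 1) / r) * ((q ^ n - 1) / (q - 1)) := by
          rw [← Finset.mul_sum, geom_sum_eq hq1.ne']
        have hc0 : (0:ℝ) ≤ 3 / 4 * u0 ^ (s + 1) / r := by positivity
        have step3 : (3 / 4 * u0 ^ (s + 1) / r) * ((q ^ n - 1) / (q - 1))
            ≤ (3 / 4 * u0 ^ (s + 1) / r) * (q ^ n / (q - 1)) := by
          apply mul_le_mul_of_nonneg_left _ hc0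
          apply div_le_div_of_nonneg_right ?_ (by linarith)
          linarith
        calc ∑ i ∈ Finset.range n, F i
            ≤ ∑ i ∈ Finset.range n, (3 / 4 * u0 ^ (s + 1) / r) * q ^ i := step1
          _ = (3 / 4 * u0 ^ (s + 1) / r) * ((q ^ n - 1) / (q - 1)) := step2
          _ ≤ (3 / 4 * u0 ^ (s + 1) / r) * (q ^ n / (q - 1)) := step3
          _ = 3 / 4 * (u0 ^ (s + 1) * q ^ n) * (r⁻¹ * (q - 1)⁻¹) := by ring
          _ ≤ 3 / 4 * (q * (r ^ s * r)) * (r⁻¹ * (q - 1)⁻¹) := by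
              apply mul_le_mul_of_nonneg_right _ (by positivity)
              rw [hqn]
              linarith [hle]
          _ = 3 / 4 * q * (q - 1)⁻¹ * r ^ s * (r * r⁻¹) := by ring
          _ = 3 / 4 * q * (q - 1)⁻¹ * r ^ s := by
              rw [mul_inv_cancel₀ hrpos.ne', mul_one]
      -- tail bound
      have hFA' : ∀ i, F (i + n) ≤ (3 / 16 * r * (u0 * 4 ^ n) ^ (s - 1)) * ρ ^ i := by
        intro i
        calc F (i + n) ≤ (3 / 16 * r * u0 ^ (s - 1)) * ρ ^ (i + n) := hFA (i + n)
          _ = (3 / 16 * r * (u0 * 4 ^ n) ^ (s - 1)) * ρ ^ i := by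
              rw [Real.mul_rpow hu0pos.le (by positivity),
                aux_pow_rpow 4 (by norm_num) n (s - 1), pow_add]
              ring
      have htailS : Summable (fun i : ℕ => F (i + n)) := (summable_nat_add_iff n).mpr hsum
      have htail : (∑' i, F (i + n)) ≤ 3 / 16 * (1 - ρ)⁻¹ * r ^ s := by
        have h1 : (∑' i, F (i + n)) ≤ (3 / 16 * r * (u0 * 4 ^ n) ^ (s - 1)) * (1 - ρ)⁻¹ := by
          calc (∑' i, F (i + n)) ≤ ∑' i, (3 / 16 * r * (u0 * 4 ^ n) ^ (s - 1)) * ρ ^ i :=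
                Summable.tsum_le_tsum hFA' htailS ((summable_geometric_of_lt_one hρ0 hρ1).mul_left _)
            _ = (3 / 16 * r * (u0 * 4 ^ n) ^ (s - 1)) * (1 - ρ)⁻¹ := by
                rw [tsum_mul_left, tsum_geometric_of_lt_one hρ0 hρ1]
        have h2 : (u0 * 4 ^ n) ^ (s - 1) ≤ r ^ (s - 1) :=
          Real.rpow_le_rpow_of_nonpos hrpos hn1 (by linarith)
        have h3 : r * r ^ (s - 1) = r ^ s := by
          rw [mul_comm, ← Real.rpow_add_one hrpos.ne']
          congr 1; ring
        calc (∑' i, F (i + n)) ≤ (3 / 16 * r * (u0 * 4 ^ n) ^ (s - 1)) * (1 - ρ)⁻¹ := h1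
          _ ≤ (3 / 16 * r * r ^ (s - 1)) * (1 - ρ)⁻¹ := by
              apply mul_le_mul_of_nonneg_right _ hA.le
              nlinarith [h2, hrpos]
          _ = 3 / 16 * (1 - ρ)⁻¹ * r ^ s := by rw [mul_assoc (3/16), h3]; ring
      -- combine
      have hrs4 : r ^ s ≤ 4 * (1 + r) ^ s := by
        apply rpow_comp hs₁.le hs₂.le hrpos (by positivity)
        · linarith
        · nlinarith [hu0_4, hr_gt]
      have hrsnn : (0:ℝ) ≤ r ^ s := Real.rpow_nonneg hrpos.le s
      have hq0 : (0:ℝ) < q := by linarith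
      rw [hCdef]
      nlinarith [mul_le_mul_of_nonneg_left hrs4 (show (0:ℝ) ≤ 3/16*(1-ρ)⁻¹ by positivity),
        mul_le_mul_of_nonneg_left hrs4 (show (0:ℝ) ≤ 3/4*q*(q-1)⁻¹ by positivity),
        mul_pos hA hP, hhead, htail]
end

section
/- Let -1 < s < 1. There exists a constant C = C(s) > 0 such that for every real κ ≥ 1 and every ξ ∈ ℝ, (1 + ξ²)^s ≤ C [ (1 + ξ²)^{-1} + κ² ∑_{k=1}^∞ 2^{2sk} w(ξ; κ 2^k) ]. -/
open Real

lemma w_le (ξ m : ℝ) (hm : 0 < m) : w ξ m ≤ 3 * ξ ^ 2 / (16 * m ^ 2) := by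
  unfold w
  rw [div_le_div_iff₀ (by positivity) (by positivity)]
  nlinarith [sq_nonneg ξ, sq_nonneg m, sq_nonneg (ξ * m), sq_nonneg (ξ ^ 2),
    mul_nonneg (sq_nonneg ξ) (sq_nonneg (ξ * m)), mul_nonneg (sq_nonneg ξ) (sq_nonneg (ξ ^ 2))]

lemma w_ge (ξ m : ℝ) (hm : 0 < m) (h : ξ ^ 2 ≤ 4 * m ^ 2) :
    3 * ξ ^ 2 / (160 * m ^ 2) ≤ w ξ m := by
  unfold w
  rw [div_le_div_iff₀ (by positivity) (by positivity)]
  nlinarith [mul_nonneg (mul_nonneg (sq_nonneg ξ) (by positivity : (0:ℝ) ≤ ξ ^ 2 + 9 * m ^ 2))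
    (by linarith : (0:ℝ) ≤ 4 * m ^ 2 - ξ ^ 2)]

lemma npow_rpow (n : ℕ) (a : ℝ) : ((2 : ℝ) ^ n) ^ a = (2 : ℝ) ^ ((n : ℝ) * a) := by
  rw [← rpow_natCast 2 n, ← rpow_mul (by norm_num)]

lemma key_summable (s κ ξ : ℝ) (hs₂ : s < 1) (hκ : 1 ≤ κ) :
    Summable (fun k : ℕ => ((2 : ℝ) ^ (k + 1)) ^ (2 * s) * w ξ (κ * 2 ^ (k + 1))) := by
  have hκ0 : (0:ℝ) < κ := lt_of_lt_of_le one_pos hκ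
  set r : ℝ := (2 : ℝ) ^ (2 * s - 2) with hr
  have hr0 : (0 : ℝ) < r := rpow_pos_of_pos two_pos _
  have hr1 : r < 1 := rpow_lt_one_of_one_lt_of_neg one_lt_two (by linarith)
  apply Summable.of_nonneg_of_le (fun k => ?_) (fun k => ?_)
    ((summable_geometric_of_lt_one hr0.le hr1).mul_left (3 * ξ ^ 2 / 16 * r))
  · exact mul_nonneg (rpow_nonneg (by positivity) _) (w_nonneg _ _)
  · have h1 : w ξ (κ * 2 ^ (k + 1)) ≤ 3 * ξ ^ 2 / (16 * ((2:ℝ) ^ (k + 1)) ^ 2) := by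
      refine (w_le ξ _ (by positivity)).trans ?_
      apply div_le_div_of_nonneg_left (by positivity) (by positivity)
      nlinarith [pow_pos (two_pos (α := ℝ)) (k + 1), sq_nonneg ((2:ℝ) ^ (k + 1)),
        pow_le_pow_left₀ (by positivity : (0:ℝ) ≤ 2 ^ (k+1))
          (le_mul_of_one_le_left (by positivity) hκ) 2]
    calc ((2 : ℝ) ^ (k + 1)) ^ (2 * s) * w ξ (κ * 2 ^ (k + 1))
        ≤ ((2 : ℝ) ^ (k + 1)) ^ (2 * s) * (3 * ξ ^ 2 / (16 * ((2:ℝ) ^ (k + 1)) ^ 2)) :=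
          mul_le_mul_of_nonneg_left h1 (rpow_nonneg (by positivity) _)
      _ = 3 * ξ ^ 2 / 16 * r * r ^ k := by
          have e1 : ((2 : ℝ) ^ (k + 1)) ^ (2 * s) = (2:ℝ) ^ (((k:ℝ) + 1) * (2 * s)) := by
            rw [npow_rpow]; push_cast; ring_nf
          have e2 : ((2:ℝ) ^ (k + 1)) ^ 2 = (2:ℝ) ^ (((k:ℝ) + 1) * 2) := by
            rw [← rpow_natCast ((2:ℝ) ^ (k+1)) 2, npow_rpow]; push_cast; ring_nf
          have e3 : r * r ^ k = (2:ℝ) ^ (((k:ℝ) + 1) * (2 * s) - ((k:ℝ) + 1) * 2) := by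
            rw [hr, ← rpow_natCast ((2:ℝ) ^ (2*s-2)) k, ← rpow_mul (by norm_num),
              ← rpow_add two_pos]
            ring_nf
          rw [e1, e2, mul_assoc, e3, rpow_sub two_pos]
          ring

lemma exists_dyadic (t : ℝ) (ht : 2 ≤ t) : ∃ n : ℕ, 1 ≤ n ∧ (2:ℝ) ^ n ≤ t ∧ t < 2 ^ (n + 1) := by
  have ht0 : 0 < t := by linarith
  have hL1 : 1 ≤ Real.logb 2 t := by
    have h : Real.logb 2 2 ≤ Real.logb 2 t :=
      (Real.logb_le_logb (by norm_num) (by norm_num) (by linarith)).mpr ht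
    rwa [Real.logb_self_eq_one (by norm_num : (1:ℝ) < 2)] at h
  refine ⟨⌊Real.logb 2 t⌋₊, Nat.le_floor (by exact_mod_cast hL1), ?_, ?_⟩
  · calc (2:ℝ) ^ ⌊Real.logb 2 t⌋₊ = (2:ℝ) ^ ((⌊Real.logb 2 t⌋₊ : ℝ)) :=
        (rpow_natCast _ _).symm
      _ ≤ (2:ℝ) ^ Real.logb 2 t :=
        rpow_le_rpow_of_exponent_le one_le_two (Nat.floor_le (by linarith))
      _ = t := rpow_logb two_pos (by norm_num) ht0
  · calc t = (2:ℝ) ^ Real.logb 2 t := (rpow_logb two_pos (by norm_num) ht0).symm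
      _ < (2:ℝ) ^ ((⌊Real.logb 2 t⌋₊ : ℝ) + 1) :=
        rpow_lt_rpow_of_exponent_lt one_lt_two (Nat.lt_floor_add_one _)
      _ = (2:ℝ) ^ (⌊Real.logb 2 t⌋₊ + 1) := by
        rw [← rpow_natCast 2 (⌊Real.logb 2 t⌋₊ + 1)]; push_cast; ring_nf

lemma key_pow (s κ : ℝ) (hs₁ : -1 < s) (hs₂ : s < 1) (hκ : 1 ≤ κ) (n : ℕ) (ξ : ℝ)
    (hξ1 : 1 < ξ ^ 2) (hm2 : (κ * 2 ^ n) ^ 2 ≤ ξ ^ 2) (hξ4 : ξ ^ 2 ≤ 4 * (κ * 2 ^ n) ^ 2) :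
    (1 / 8) * (1 + ξ ^ 2) ^ s ≤ κ ^ 2 * ((2:ℝ) ^ n) ^ (2 * s) := by
  have hκ0 : (0:ℝ) < κ := lt_of_lt_of_le one_pos hκ
  set m := κ * 2 ^ n with hm
  have hm0 : (0:ℝ) < m := by positivity
  have hp : (0:ℝ) < (2:ℝ) ^ n := by positivity
  rcases le_or_gt 0 s with hs0 | hs0
  · have h1 : κ ^ (2 * s) ≤ κ ^ 2 := by
      have h := rpow_le_rpow_of_exponent_le hκ (show 2 * s ≤ ((2:ℕ):ℝ) by push_cast; linarith)
      rwa [rpow_natCast] at h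
    have h3 : m ^ (2 * s) ≤ κ ^ 2 * ((2:ℝ) ^ n) ^ (2 * s) := by
      rw [hm, mul_rpow hκ0.le hp.le]
      exact mul_le_mul_of_nonneg_right h1 (rpow_nonneg hp.le _)
    refine le_trans ?_ h3
    have h4 : m ^ (2 * s) = (m ^ 2) ^ s := by
      rw [← rpow_natCast m 2, ← rpow_mul hm0.le]; norm_num
    have h5 : (1 + ξ ^ 2) / 8 ≤ m ^ 2 := by nlinarith
    have h6 : ((1 + ξ ^ 2) / 8) ^ s ≤ (m ^ 2) ^ s := rpow_le_rpow (by positivity) h5 hs0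
    have h7 : ((1 + ξ ^ 2) / 8) ^ s = (1 + ξ ^ 2) ^ s / 8 ^ s :=
      div_rpow (by positivity) (by norm_num) s
    have h8 : (8:ℝ) ^ s ≤ 8 := by
      have := rpow_le_rpow_of_exponent_le (by norm_num : (1:ℝ) ≤ 8) hs₂.le
      rwa [rpow_one] at this
    have h80 : (0:ℝ) < (8:ℝ) ^ s := rpow_pos_of_pos (by norm_num) s
    have hX0 : (0:ℝ) < (1 + ξ ^ 2) ^ s := rpow_pos_of_pos (by positivity) s
    have h9 : (1 / 8) * (1 + ξ ^ 2) ^ s ≤ (1 + ξ ^ 2) ^ s / 8 ^ s := by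
      have h := div_le_div_of_nonneg_left hX0.le h80 h8
      linarith
    calc (1 / 8) * (1 + ξ ^ 2) ^ s ≤ (1 + ξ ^ 2) ^ s / 8 ^ s := h9
      _ = ((1 + ξ ^ 2) / 8) ^ s := h7.symm
      _ ≤ (m ^ 2) ^ s := h6
      _ = m ^ (2 * s) := h4.symm
  · have h2n_le_m : (2:ℝ) ^ n ≤ m := le_mul_of_one_le_left hp.le hκ
    have h1 : m ^ (2 * s) ≤ ((2:ℝ) ^ n) ^ (2 * s) :=
      rpow_le_rpow_of_nonpos hp h2n_le_m (by linarith)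
    have hmle : m ≤ |ξ| := by nlinarith [sq_abs ξ, abs_nonneg ξ]
    have h2 : |ξ| ^ (2 * s) ≤ m ^ (2 * s) := rpow_le_rpow_of_nonpos hm0 hmle (by linarith)
    have h3 : (1 + ξ ^ 2) ^ s ≤ (ξ ^ 2) ^ s :=
      rpow_le_rpow_of_nonpos (by linarith) (by linarith) hs0.le
    have h4 : (ξ ^ 2) ^ s = |ξ| ^ (2 * s) := by
      rw [← sq_abs, ← rpow_natCast |ξ| 2, ← rpow_mul (abs_nonneg ξ)]; norm_num
    have h5 : (1:ℝ) ≤ κ ^ 2 := by nlinarith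
    have h6 : ((2:ℝ) ^ n) ^ (2 * s) ≤ κ ^ 2 * ((2:ℝ) ^ n) ^ (2 * s) :=
      le_mul_of_one_le_left (rpow_nonneg hp.le _) h5
    have hX0 : (0:ℝ) ≤ (1 + ξ ^ 2) ^ s := rpow_nonneg (by positivity) s
    calc (1 / 8) * (1 + ξ ^ 2) ^ s ≤ (1 + ξ ^ 2) ^ s := by linarith
      _ ≤ (ξ ^ 2) ^ s := h3
      _ = |ξ| ^ (2 * s) := h4
      _ ≤ m ^ (2 * s) := h2
      _ ≤ ((2:ℝ) ^ n) ^ (2 * s) := h1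
      _ ≤ κ ^ 2 * ((2:ℝ) ^ n) ^ (2 * s) := h6

/-- Let `-1 < s < 1`. There exists `C = C(s) > 0` such that for every
real `κ ≥ 1` and every `ξ ∈ ℝ`,
`(1 + ξ²)^s ≤ C [(1 + ξ²)^{-1} + κ² ∑_{k=1}^∞ 2^{2sk} w(ξ; κ 2^k)]`. -/
theorem stmt_10 (s : ℝ) (hs₁ : -1 < s) (hs₂ : s < 1) :
    ∃ C : ℝ, 0 < C ∧ ∀ κ : ℝ, 1 ≤ κ → ∀ ξ : ℝ,
      (1 + ξ ^ 2) ^ s ≤ C * ((1 + ξ ^ 2)⁻¹ +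
        κ ^ 2 * ∑' k : ℕ, ((2 : ℝ) ^ (k + 1)) ^ (2 * s) * w ξ (κ * 2 ^ (k + 1))) := by
  refine ⟨2048, by norm_num, fun κ hκ ξ => ?_⟩
  have hκ0 : (0:ℝ) < κ := lt_of_lt_of_le one_pos hκ
  have hsum := key_summable s κ ξ hs₂ hκ
  set f : ℕ → ℝ := fun k => ((2 : ℝ) ^ (k + 1)) ^ (2 * s) * w ξ (κ * 2 ^ (k + 1)) with hf
  have hfn : ∀ k, 0 ≤ f k := fun k =>
    mul_nonneg (rpow_nonneg (by positivity) _) (w_nonneg _ _)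
  have hT0 : 0 ≤ ∑' k, f k := tsum_nonneg hfn
  have hbase : (0:ℝ) < 1 + ξ ^ 2 := by positivity
  have hinv0 : (0:ℝ) ≤ (1 + ξ ^ 2)⁻¹ := by positivity
  rcases le_or_gt (ξ ^ 2) 1 with hsmall | hbig
  · have h1 : (1 + ξ ^ 2) ^ s ≤ 2 := by
      calc (1 + ξ ^ 2) ^ s ≤ (1 + ξ ^ 2) ^ (1:ℝ) :=
          rpow_le_rpow_of_exponent_le (by nlinarith [sq_nonneg ξ]) hs₂.le
        _ = 1 + ξ ^ 2 := rpow_one _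
        _ ≤ 2 := by linarith
    have h2 : (2:ℝ)⁻¹ ≤ (1 + ξ ^ 2)⁻¹ := inv_anti₀ hbase (by linarith)
    nlinarith [mul_nonneg (sq_nonneg κ) hT0]
  · have key : ∃ j : ℕ, 3 / 5120 * (1 + ξ ^ 2) ^ s ≤ κ ^ 2 * f j := by
      rcases le_or_gt |ξ| (2 * κ) with hA | hB
      · refine ⟨0, ?_⟩
        have hf0e : f 0 = (2:ℝ) ^ (2 * s) * w ξ (κ * 2) := by
          rw [hf]; norm_num
        have hm0 : (0:ℝ) < κ * 2 := by positivity
        have hξ4 : ξ ^ 2 ≤ 4 * (κ * 2) ^ 2 := by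
          nlinarith [sq_abs ξ, abs_nonneg ξ, sq_nonneg κ]
        have hw := w_ge ξ (κ * 2) hm0 hξ4
        have hP : (1/4 : ℝ) ≤ (2:ℝ) ^ (2 * s) := by
          have h := rpow_le_rpow_of_exponent_le one_le_two (by linarith : (-2:ℝ) ≤ 2 * s)
          have e : (2:ℝ) ^ (-2:ℝ) = 1/4 := by
            rw [show (-2:ℝ) = ((-2:ℤ):ℝ) by norm_num, rpow_intCast]; norm_num
          linarith [e ▸ h]
        have hXs : (1 + ξ ^ 2) ^ s ≤ 2 * ξ ^ 2 := by
          calc (1 + ξ ^ 2) ^ s ≤ (1 + ξ ^ 2) ^ (1:ℝ) :=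
              rpow_le_rpow_of_exponent_le (by linarith) hs₂.le
            _ = 1 + ξ ^ 2 := rpow_one _
            _ ≤ 2 * ξ ^ 2 := by linarith
        have hq : κ ^ 2 * ((1/4) * (3 * ξ ^ 2 / (160 * (κ * 2) ^ 2))) = 3 * ξ ^ 2 / 2560 := by
          field_simp
          ring
        have hf0 : (1/4) * (3 * ξ ^ 2 / (160 * (κ * 2) ^ 2)) ≤ f 0 := by
          rw [hf0e]
          exact mul_le_mul hP hw (by positivity) (rpow_nonneg (by norm_num) _)
        calc 3 / 5120 * (1 + ξ ^ 2) ^ s ≤ 3 / 5120 * (2 * ξ ^ 2) := by nlinarith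
          _ = 3 * ξ ^ 2 / 2560 := by ring
          _ = κ ^ 2 * ((1/4) * (3 * ξ ^ 2 / (160 * (κ * 2) ^ 2))) := hq.symm
          _ ≤ κ ^ 2 * f 0 := mul_le_mul_of_nonneg_left hf0 (by positivity)
      · obtain ⟨n, hn1, hlo, hhi⟩ := exists_dyadic (|ξ| / κ) (by
          rw [le_div_iff₀ hκ0]; linarith)
        obtain ⟨j, rfl⟩ : ∃ j, n = j + 1 := ⟨n - 1, (Nat.succ_pred_eq_of_pos hn1).symm⟩
        refine ⟨j, ?_⟩
        set m := κ * 2 ^ (j + 1) with hmdef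
        have hm0 : (0:ℝ) < m := by positivity
        have hmle : m ≤ |ξ| := by
          have h := (le_div_iff₀ hκ0).mp hlo
          rw [hmdef]; linarith [h]
        have hlt : |ξ| < 2 * m := by
          have h := (div_lt_iff₀ hκ0).mp hhi
          have e : (2:ℝ) ^ (j + 1 + 1) = 2 * 2 ^ (j + 1) := by ring
          rw [hmdef]; rw [e] at h; linarith
        have hm2 : m ^ 2 ≤ ξ ^ 2 := by nlinarith [sq_abs ξ, abs_nonneg ξ]
        have hξ4 : ξ ^ 2 ≤ 4 * m ^ 2 := by nlinarith [sq_abs ξ, abs_nonneg ξ]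
        have hw := w_ge ξ m hm0 hξ4
        have hw' : (3:ℝ)/160 ≤ w ξ m := by
          refine le_trans ?_ hw
          rw [le_div_iff₀ (by positivity)]
          nlinarith
        have hkp := key_pow s κ hs₁ hs₂ hκ (j+1) ξ hbig (hmdef ▸ hm2) (hmdef ▸ hξ4)
        have hX0 : (0:ℝ) ≤ (1 + ξ ^ 2) ^ s := rpow_nonneg hbase.le s
        calc 3 / 5120 * (1 + ξ ^ 2) ^ s ≤ (1/8) * (1 + ξ ^ 2) ^ s * (3/160) := by nlinarith
          _ ≤ (κ ^ 2 * ((2:ℝ) ^ (j+1)) ^ (2 * s)) * w ξ m :=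
              mul_le_mul hkp hw' (by norm_num) (by positivity)
          _ = κ ^ 2 * f j := by rw [hf]; ring
    obtain ⟨j, hj⟩ := key
    have hle := Summable.le_tsum hsum j (fun i _ => hfn i)
    have h2 : κ ^ 2 * f j ≤ κ ^ 2 * tsum f :=
      mul_le_mul_of_nonneg_left hle (by positivity)
    linarith [rpow_nonneg hbase.le s]
end

section
/- Let σ < s be real numbers and let (f_n) be a sequence of measurable functions f_n : ℝ → ℂ with ∫_ℝ (1 + ξ²)^s |f_n(ξ)|² dξ < ∞ for every n. Then (f_n) is Cauchy with respect to the norm (∫_ℝ (1 + ξ²)^s |·|² dξ)^{1/2} if and only if both: (a) (f_n) is Cauchy with respect to the norm (∫_ℝ (1 + ξ²)^σ |·|² dξ)^{1/2}, and (b) lim_{κ→∞} sup_n ∫_{|ξ| ≥ κ} (1 + ξ²)^s |f_n(ξ)|² dξ = 0. -/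
open Real MeasureTheory Filter ENNReal NNReal

lemma stmt14_sq_le (a b : ℝ≥0) :
    ((a : ℝ≥0∞) + b) ^ 2 ≤ 2 * (a : ℝ≥0∞) ^ 2 + 2 * (b : ℝ≥0∞) ^ 2 := by
  have h : ((a + b : ℝ≥0)) ^ 2 ≤ 2 * a ^ 2 + 2 * b ^ 2 := by
    rw [← NNReal.coe_le_coe]
    push_cast
    nlinarith [sq_nonneg ((a : ℝ) - b)]
  exact_mod_cast h

lemma stmt14_half_lt {a : ℝ≥0∞} {c : ℝ} (hc : 0 < c) :
    a ^ (1 / 2 : ℝ) < ENNReal.ofReal (Real.sqrt c) ↔ a < ENNReal.ofReal c := by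
  rw [Real.sqrt_eq_rpow, ← ENNReal.ofReal_rpow_of_pos hc]
  exact ENNReal.rpow_lt_rpow_iff (by norm_num)

lemma stmt14_meas (t : ℝ) {g : ℝ → ℂ} (hg : Measurable g) :
    Measurable fun ξ : ℝ => ENNReal.ofReal ((1 + ξ ^ 2) ^ t) * (‖g ξ‖₊ : ℝ≥0∞) ^ 2 := by
  refine Measurable.mul (f := fun ξ : ℝ => ENNReal.ofReal ((1 + ξ ^ 2) ^ t))
    (g := fun ξ : ℝ => (‖g ξ‖₊ : ℝ≥0∞) ^ 2) ?_ ?_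
  · apply Measurable.ennreal_ofReal
    exact ((continuous_const.add (continuous_pow 2)).rpow_const
      (fun ξ => Or.inl (by show (1 : ℝ) + ξ ^ 2 ≠ 0; positivity))).measurable
  · exact (hg.nnnorm.coe_nnreal_ennreal).pow_const 2

lemma stmt14_weight_mono {t u : ℝ} (htu : t ≤ u) (ξ : ℝ) :
    ENNReal.ofReal ((1 + ξ ^ 2) ^ t) ≤ ENNReal.ofReal ((1 + ξ ^ 2) ^ u) :=
  ENNReal.ofReal_le_ofReal
    (Real.rpow_le_rpow_of_exponent_le (by nlinarith [sq_nonneg ξ]) htu)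

lemma stmt14_measset (κ : ℝ) : MeasurableSet {ξ : ℝ | κ ≤ |ξ|} :=
  measurableSet_le measurable_const continuous_abs.measurable

/-- A finite lintegral has small tails. -/
lemma stmt14_tail_small {g : ℝ → ℝ≥0∞} (hg : Measurable g)
    (hfin : (∫⁻ ξ, g ξ) < ⊤) {ε : ℝ≥0∞} (hε : 0 < ε) :
    ∃ κ : ℝ, (∫⁻ ξ in {ξ : ℝ | κ ≤ |ξ|}, g ξ) ≤ ε := by
  set ν := volume.withDensity g with hν
  have happ : ∀ κ : ℝ, (∫⁻ ξ in {ξ : ℝ | κ ≤ |ξ|}, g ξ) = ν {ξ : ℝ | κ ≤ |ξ|} :=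
    fun κ => (withDensity_apply g (stmt14_measset κ)).symm
  have hanti : Antitone fun k : ℕ => {ξ : ℝ | (k : ℝ) ≤ |ξ|} := by
    intro k l hkl ξ hξ
    simp only [Set.mem_setOf_eq] at hξ ⊢
    exact le_trans (by exact_mod_cast hkl) hξ
  have hνfin : ν {ξ : ℝ | ((0 : ℕ) : ℝ) ≤ |ξ|} ≠ ∞ := by
    refine ne_of_lt (lt_of_le_of_lt (measure_mono (Set.subset_univ _)) ?_)
    rw [hν, withDensity_apply g MeasurableSet.univ, Measure.restrict_univ]
    exact hfin
  have hiInter : (⋂ k : ℕ, {ξ : ℝ | (k : ℝ) ≤ |ξ|}) = ∅ := by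
    ext ξ
    simp only [Set.mem_iInter, Set.mem_setOf_eq, Set.mem_empty_iff_false, iff_false, not_forall,
      not_le]
    exact exists_nat_gt |ξ|
  have h1 : Tendsto (fun k : ℕ => ν {ξ : ℝ | (k : ℝ) ≤ |ξ|}) atTop (nhds 0) := by
    have := tendsto_measure_iInter_atTop (μ := ν)
      (fun k => (stmt14_measset ((k : ℕ) : ℝ)).nullMeasurableSet) hanti ⟨0, hνfin⟩
    rwa [hiInter, measure_empty] at this
  obtain ⟨k, hk⟩ := (h1.eventually_lt_const hε).exists
  exact ⟨(k : ℝ), by rw [happ]; exact hk.le⟩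

/-- Pointwise square bound. -/
lemma stmt14_ptwise (w : ℝ≥0∞) (x y z : ℂ) (h : ‖x‖₊ ≤ ‖y‖₊ + ‖z‖₊) :
    w * (‖x‖₊ : ℝ≥0∞) ^ 2 ≤
      2 * (w * (‖y‖₊ : ℝ≥0∞) ^ 2) + 2 * (w * (‖z‖₊ : ℝ≥0∞) ^ 2) := by
  calc w * (‖x‖₊ : ℝ≥0∞) ^ 2
      ≤ w * ((‖y‖₊ : ℝ≥0∞) + ‖z‖₊) ^ 2 := by
        refine mul_le_mul_right (pow_le_pow_left₀ zero_le ?_ 2) w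
        exact_mod_cast h
    _ ≤ w * (2 * (‖y‖₊ : ℝ≥0∞) ^ 2 + 2 * (‖z‖₊ : ℝ≥0∞) ^ 2) :=
        mul_le_mul_right (stmt14_sq_le _ _) w
    _ = 2 * (w * (‖y‖₊ : ℝ≥0∞) ^ 2) + 2 * (w * (‖z‖₊ : ℝ≥0∞) ^ 2) := by ring

theorem stmt_14 (s σ : ℝ) (hσ : σ < s) (f : ℕ → ℝ → ℂ)
    (hmeas : ∀ n, Measurable (f n))
    (hfin : ∀ n, (∫⁻ ξ : ℝ,
      ENNReal.ofReal ((1 + ξ ^ 2) ^ s) * (‖f n ξ‖₊ : ℝ≥0∞) ^ 2) < ⊤) :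
    (∀ ε : ℝ, 0 < ε → ∃ N : ℕ, ∀ m ≥ N, ∀ n ≥ N,
        (∫⁻ ξ : ℝ, ENNReal.ofReal ((1 + ξ ^ 2) ^ s) *
          (‖f m ξ - f n ξ‖₊ : ℝ≥0∞) ^ 2) ^ (1 / 2 : ℝ) < ENNReal.ofReal ε)
    ↔ ((∀ ε : ℝ, 0 < ε → ∃ N : ℕ, ∀ m ≥ N, ∀ n ≥ N,
        (∫⁻ ξ : ℝ, ENNReal.ofReal ((1 + ξ ^ 2) ^ σ) *
          (‖f m ξ - f n ξ‖₊ : ℝ≥0∞) ^ 2) ^ (1 / 2 : ℝ) < ENNReal.ofReal ε)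
      ∧ Tendsto
          (fun κ : ℝ => ⨆ n : ℕ, ∫⁻ ξ : ℝ in {ξ : ℝ | κ ≤ |ξ|},
            ENNReal.ofReal ((1 + ξ ^ 2) ^ s) * (‖f n ξ‖₊ : ℝ≥0∞) ^ 2)
          atTop (nhds 0)) := by
  constructor
  · intro hs_cauchy
    constructor
    · -- Cauchy in H^σ
      intro ε hε
      obtain ⟨N, hN⟩ := hs_cauchy ε hε
      refine ⟨N, fun m hm n hn => lt_of_le_of_lt ?_ (hN m hm n hn)⟩
      refine ENNReal.rpow_le_rpow ?_ (by norm_num)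
      exact lintegral_mono fun ξ => mul_le_mul_left (stmt14_weight_mono hσ.le ξ) _
    · -- equicontinuity of tails
      rw [ENNReal.tendsto_nhds_zero]
      intro ε hε
      set r : ℝ := (min ε 1).toReal with hr
      have hminne : min ε 1 ≠ ∞ := ne_of_lt (lt_of_le_of_lt (min_le_right _ _) (by norm_num))
      have hminpos : 0 < min ε 1 := lt_min hε (by norm_num)
      have hrpos : 0 < r := ENNReal.toReal_pos hminpos.ne' hminne
      have hofr : ENNReal.ofReal r = min ε 1 := ENNReal.ofReal_toReal hminne
      obtain ⟨N, hN⟩ := hs_cauchy (Real.sqrt (r / 4)) (Real.sqrt_pos.2 (by linarith))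
      have hN' : ∀ m ≥ N, ∀ n ≥ N,
          (∫⁻ ξ : ℝ, ENNReal.ofReal ((1 + ξ ^ 2) ^ s) *
            (‖f m ξ - f n ξ‖₊ : ℝ≥0∞) ^ 2) < ENNReal.ofReal (r / 4) :=
        fun m hm n hn => (stmt14_half_lt (by linarith)).1 (hN m hm n hn)
      -- a tail cutoff for every n
      have hκex : ∀ n : ℕ, ∃ κ : ℝ, (∫⁻ ξ : ℝ in {ξ : ℝ | κ ≤ |ξ|},
          ENNReal.ofReal ((1 + ξ ^ 2) ^ s) * (‖f n ξ‖₊ : ℝ≥0∞) ^ 2)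
            ≤ ENNReal.ofReal (r / 4) :=
        fun n => stmt14_tail_small (stmt14_meas s (hmeas n)) (hfin n)
          (ENNReal.ofReal_pos.2 (by linarith))
      choose κf hκf using hκex
      set κ₀ : ℝ := (Finset.range (N + 1)).sup' ⟨0, by simp⟩ κf with hκ₀
      refine Filter.eventually_atTop.2 ⟨κ₀, fun κ hκκ => ?_⟩
      refine iSup_le fun n => ?_
      have hsub : ∀ n' : ℕ, κf n' ≤ κ → (∫⁻ ξ : ℝ in {ξ : ℝ | κ ≤ |ξ|},
          ENNReal.ofReal ((1 + ξ ^ 2) ^ s) * (‖f n' ξ‖₊ : ℝ≥0∞) ^ 2)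
            ≤ ENNReal.ofReal (r / 4) := by
        intro n' hle
        refine le_trans (lintegral_mono_set ?_) (hκf n')
        intro ξ hξ
        exact le_trans hle hξ
      have hrle : ENNReal.ofReal r ≤ ε := hofr ▸ min_le_left _ _
      rcases le_or_gt n N with h | h
      · refine le_trans (hsub n ?_) (le_trans (ENNReal.ofReal_le_ofReal (by linarith)) hrle)
        refine le_trans (Finset.le_sup' κf ?_) hκκ
        simp only [Finset.mem_range]
        omega
      · -- n > N : compare with f N
        have hκN : κf N ≤ κ :=
          le_trans (Finset.le_sup' κf (by simp)) hκκ
        have hpt : ∀ ξ : ℝ, ENNReal.ofReal ((1 + ξ ^ 2) ^ s) * (‖f n ξ‖₊ : ℝ≥0∞) ^ 2 ≤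
            2 * (ENNReal.ofReal ((1 + ξ ^ 2) ^ s) * (‖f n ξ - f N ξ‖₊ : ℝ≥0∞) ^ 2) +
            2 * (ENNReal.ofReal ((1 + ξ ^ 2) ^ s) * (‖f N ξ‖₊ : ℝ≥0∞) ^ 2) := by
          intro ξ
          refine stmt14_ptwise _ _ _ _ ?_
          simpa using nnnorm_add_le (f n ξ - f N ξ) (f N ξ)
        calc (∫⁻ ξ : ℝ in {ξ : ℝ | κ ≤ |ξ|},
              ENNReal.ofReal ((1 + ξ ^ 2) ^ s) * (‖f n ξ‖₊ : ℝ≥0∞) ^ 2)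
            ≤ ∫⁻ ξ : ℝ in {ξ : ℝ | κ ≤ |ξ|},
              (2 * (ENNReal.ofReal ((1 + ξ ^ 2) ^ s) * (‖f n ξ - f N ξ‖₊ : ℝ≥0∞) ^ 2) +
               2 * (ENNReal.ofReal ((1 + ξ ^ 2) ^ s) * (‖f N ξ‖₊ : ℝ≥0∞) ^ 2)) :=
              lintegral_mono fun ξ => hpt ξ
          _ = 2 * (∫⁻ ξ : ℝ in {ξ : ℝ | κ ≤ |ξ|},
                ENNReal.ofReal ((1 + ξ ^ 2) ^ s) * (‖f n ξ - f N ξ‖₊ : ℝ≥0∞) ^ 2) +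
              2 * (∫⁻ ξ : ℝ in {ξ : ℝ | κ ≤ |ξ|},
                ENNReal.ofReal ((1 + ξ ^ 2) ^ s) * (‖f N ξ‖₊ : ℝ≥0∞) ^ 2) := by
              rw [lintegral_add_left ((stmt14_meas s (g := fun ξ => f n ξ - f N ξ) ((hmeas n).sub (hmeas N))).const_mul 2),
                lintegral_const_mul' _ _ (by norm_num),
                lintegral_const_mul' _ _ (by norm_num)]
          _ ≤ 2 * (∫⁻ ξ : ℝ,
                ENNReal.ofReal ((1 + ξ ^ 2) ^ s) * (‖f n ξ - f N ξ‖₊ : ℝ≥0∞) ^ 2) +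
              2 * (∫⁻ ξ : ℝ in {ξ : ℝ | κ ≤ |ξ|},
                ENNReal.ofReal ((1 + ξ ^ 2) ^ s) * (‖f N ξ‖₊ : ℝ≥0∞) ^ 2) := by
              gcongr
              exact Measure.restrict_le_self
          _ ≤ 2 * ENNReal.ofReal (r / 4) + 2 * ENNReal.ofReal (r / 4) := by
              gcongr
              · exact (hN' n h.le N le_rfl).le
              · exact hsub N hκN
          _ = ENNReal.ofReal 2 * ENNReal.ofReal (r / 4) +
              ENNReal.ofReal 2 * ENNReal.ofReal (r / 4) := by
              norm_num
          _ = ENNReal.ofReal r := by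
              rw [← ENNReal.ofReal_mul (by norm_num), ← ENNReal.ofReal_add (by linarith)
                (by linarith)]
              congr 1
              ring
          _ ≤ ε := hrle
  · rintro ⟨hσc, htail⟩
    intro ε hε
    -- choose κ with small uniform tails
    have h1 : ∀ᶠ κ : ℝ in atTop, (⨆ n : ℕ, ∫⁻ ξ : ℝ in {ξ : ℝ | κ ≤ |ξ|},
        ENNReal.ofReal ((1 + ξ ^ 2) ^ s) * (‖f n ξ‖₊ : ℝ≥0∞) ^ 2)
          ≤ ENNReal.ofReal (ε ^ 2 / 16) :=
      (ENNReal.tendsto_nhds_zero.1 htail) _ (ENNReal.ofReal_pos.2 (by positivity))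
    obtain ⟨κ, hκtail, hκ0⟩ := (h1.and (eventually_ge_atTop (0 : ℝ))).exists
    set D : ℝ := (1 + κ ^ 2) ^ (s - σ) with hD
    have hDpos : 0 < D := Real.rpow_pos_of_pos (by nlinarith [sq_nonneg κ]) _
    obtain ⟨N, hNσ⟩ := hσc (Real.sqrt (ε ^ 2 / (4 * D)))
      (Real.sqrt_pos.2 (by positivity))
    refine ⟨N, fun m hm n hn => ?_⟩
    have hσlt : (∫⁻ ξ : ℝ, ENNReal.ofReal ((1 + ξ ^ 2) ^ σ) *
        (‖f m ξ - f n ξ‖₊ : ℝ≥0∞) ^ 2) < ENNReal.ofReal (ε ^ 2 / (4 * D)) :=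
      (stmt14_half_lt (by positivity)).1 (hNσ m hm n hn)
    rw [show ENNReal.ofReal ε = ENNReal.ofReal (Real.sqrt (ε ^ 2)) by
      rw [Real.sqrt_sq hε.le], stmt14_half_lt (by positivity)]
    -- tail part
    have htailpart : (∫⁻ ξ : ℝ in {ξ : ℝ | κ ≤ |ξ|},
        ENNReal.ofReal ((1 + ξ ^ 2) ^ s) * (‖f m ξ - f n ξ‖₊ : ℝ≥0∞) ^ 2)
          ≤ ENNReal.ofReal (ε ^ 2 / 4) := by
      have hpt : ∀ ξ : ℝ, ENNReal.ofReal ((1 + ξ ^ 2) ^ s) *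
          (‖f m ξ - f n ξ‖₊ : ℝ≥0∞) ^ 2 ≤
          2 * (ENNReal.ofReal ((1 + ξ ^ 2) ^ s) * (‖f m ξ‖₊ : ℝ≥0∞) ^ 2) +
          2 * (ENNReal.ofReal ((1 + ξ ^ 2) ^ s) * (‖f n ξ‖₊ : ℝ≥0∞) ^ 2) :=
        fun ξ => stmt14_ptwise _ _ _ _ (nnnorm_sub_le _ _)
      have hsuple : ∀ k : ℕ, (∫⁻ ξ : ℝ in {ξ : ℝ | κ ≤ |ξ|},
          ENNReal.ofReal ((1 + ξ ^ 2) ^ s) * (‖f k ξ‖₊ : ℝ≥0∞) ^ 2)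
            ≤ ENNReal.ofReal (ε ^ 2 / 16) :=
        fun k => le_trans (le_iSup (fun k : ℕ => ∫⁻ ξ : ℝ in {ξ : ℝ | κ ≤ |ξ|},
          ENNReal.ofReal ((1 + ξ ^ 2) ^ s) * (‖f k ξ‖₊ : ℝ≥0∞) ^ 2) k) hκtail
      calc (∫⁻ ξ : ℝ in {ξ : ℝ | κ ≤ |ξ|},
            ENNReal.ofReal ((1 + ξ ^ 2) ^ s) * (‖f m ξ - f n ξ‖₊ : ℝ≥0∞) ^ 2)
          ≤ ∫⁻ ξ : ℝ in {ξ : ℝ | κ ≤ |ξ|},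
            (2 * (ENNReal.ofReal ((1 + ξ ^ 2) ^ s) * (‖f m ξ‖₊ : ℝ≥0∞) ^ 2) +
             2 * (ENNReal.ofReal ((1 + ξ ^ 2) ^ s) * (‖f n ξ‖₊ : ℝ≥0∞) ^ 2)) :=
            lintegral_mono fun ξ => hpt ξ
        _ = 2 * (∫⁻ ξ : ℝ in {ξ : ℝ | κ ≤ |ξ|},
              ENNReal.ofReal ((1 + ξ ^ 2) ^ s) * (‖f m ξ‖₊ : ℝ≥0∞) ^ 2) +
            2 * (∫⁻ ξ : ℝ in {ξ : ℝ | κ ≤ |ξ|},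
              ENNReal.ofReal ((1 + ξ ^ 2) ^ s) * (‖f n ξ‖₊ : ℝ≥0∞) ^ 2) := by
            rw [lintegral_add_left ((stmt14_meas s (hmeas m)).const_mul 2),
              lintegral_const_mul' _ _ (by norm_num),
              lintegral_const_mul' _ _ (by norm_num)]
        _ ≤ 2 * ENNReal.ofReal (ε ^ 2 / 16) + 2 * ENNReal.ofReal (ε ^ 2 / 16) := by
            gcongr
            · exact hsuple m
            · exact hsuple n
        _ = ENNReal.ofReal 2 * ENNReal.ofReal (ε ^ 2 / 16) +
            ENNReal.ofReal 2 * ENNReal.ofReal (ε ^ 2 / 16) := by norm_num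
        _ ≤ ENNReal.ofReal (ε ^ 2 / 4) := by
            rw [← ENNReal.ofReal_mul (by norm_num), ← ENNReal.ofReal_add
              (by positivity) (by positivity)]
            apply ENNReal.ofReal_le_ofReal
            nlinarith [sq_nonneg ε]
    -- interior part
    have hint : (∫⁻ ξ : ℝ in {ξ : ℝ | κ ≤ |ξ|}ᶜ,
        ENNReal.ofReal ((1 + ξ ^ 2) ^ s) * (‖f m ξ - f n ξ‖₊ : ℝ≥0∞) ^ 2)
          < ENNReal.ofReal (ε ^ 2 / 4) := by
      have hptwise : ∀ ξ ∈ {ξ : ℝ | κ ≤ |ξ|}ᶜ,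
          ENNReal.ofReal ((1 + ξ ^ 2) ^ s) * (‖f m ξ - f n ξ‖₊ : ℝ≥0∞) ^ 2 ≤
          ENNReal.ofReal D * (ENNReal.ofReal ((1 + ξ ^ 2) ^ σ) *
            (‖f m ξ - f n ξ‖₊ : ℝ≥0∞) ^ 2) := by
        intro ξ hξ
        have habs : |ξ| < κ := not_le.1 hξ
        have hξκ : ξ ^ 2 ≤ κ ^ 2 := by
          have h2 := abs_lt.1 habs
          nlinarith
        have hbase : (0 : ℝ) < 1 + ξ ^ 2 := by nlinarith [sq_nonneg ξ]
        have hws : (1 + ξ ^ 2) ^ s ≤ D * (1 + ξ ^ 2) ^ σ := by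
          have : (1 + ξ ^ 2) ^ s = (1 + ξ ^ 2) ^ (s - σ) * (1 + ξ ^ 2) ^ σ := by
            rw [← Real.rpow_add hbase]; ring_nf
          rw [this]
          have hle : (1 + ξ ^ 2) ^ (s - σ) ≤ D :=
            Real.rpow_le_rpow hbase.le (by nlinarith) (by linarith)
          exact mul_le_mul_of_nonneg_right hle (Real.rpow_nonneg hbase.le _)
        calc ENNReal.ofReal ((1 + ξ ^ 2) ^ s) * (‖f m ξ - f n ξ‖₊ : ℝ≥0∞) ^ 2
            ≤ ENNReal.ofReal (D * (1 + ξ ^ 2) ^ σ) * (‖f m ξ - f n ξ‖₊ : ℝ≥0∞) ^ 2 :=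
              mul_le_mul_left (ENNReal.ofReal_le_ofReal hws) _
          _ = ENNReal.ofReal D * (ENNReal.ofReal ((1 + ξ ^ 2) ^ σ) *
              (‖f m ξ - f n ξ‖₊ : ℝ≥0∞) ^ 2) := by
              rw [ENNReal.ofReal_mul hDpos.le, mul_assoc]
      calc (∫⁻ ξ : ℝ in {ξ : ℝ | κ ≤ |ξ|}ᶜ,
            ENNReal.ofReal ((1 + ξ ^ 2) ^ s) * (‖f m ξ - f n ξ‖₊ : ℝ≥0∞) ^ 2)
          ≤ ∫⁻ ξ : ℝ in {ξ : ℝ | κ ≤ |ξ|}ᶜ,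
            ENNReal.ofReal D * (ENNReal.ofReal ((1 + ξ ^ 2) ^ σ) *
              (‖f m ξ - f n ξ‖₊ : ℝ≥0∞) ^ 2) :=
            setLIntegral_mono' (stmt14_measset κ).compl hptwise
        _ = ENNReal.ofReal D * (∫⁻ ξ : ℝ in {ξ : ℝ | κ ≤ |ξ|}ᶜ,
              ENNReal.ofReal ((1 + ξ ^ 2) ^ σ) * (‖f m ξ - f n ξ‖₊ : ℝ≥0∞) ^ 2) :=
            lintegral_const_mul' _ _ ENNReal.ofReal_ne_top
        _ ≤ ENNReal.ofReal D * (∫⁻ ξ : ℝ,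
              ENNReal.ofReal ((1 + ξ ^ 2) ^ σ) * (‖f m ξ - f n ξ‖₊ : ℝ≥0∞) ^ 2) := by
            gcongr
            exact Measure.restrict_le_self
        _ < ENNReal.ofReal D * ENNReal.ofReal (ε ^ 2 / (4 * D)) := by
            refine (ENNReal.mul_lt_mul_iff_right ?_ ENNReal.ofReal_ne_top).2 hσlt
            exact (ENNReal.ofReal_pos.2 hDpos).ne'
        _ = ENNReal.ofReal (ε ^ 2 / 4) := by
            rw [← ENNReal.ofReal_mul hDpos.le]
            congr 1
            field_simp
    -- combine
    calc (∫⁻ ξ : ℝ, ENNReal.ofReal ((1 + ξ ^ 2) ^ s) *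
          (‖f m ξ - f n ξ‖₊ : ℝ≥0∞) ^ 2)
        = (∫⁻ ξ : ℝ in {ξ : ℝ | κ ≤ |ξ|},
            ENNReal.ofReal ((1 + ξ ^ 2) ^ s) * (‖f m ξ - f n ξ‖₊ : ℝ≥0∞) ^ 2) +
          (∫⁻ ξ : ℝ in {ξ : ℝ | κ ≤ |ξ|}ᶜ,
            ENNReal.ofReal ((1 + ξ ^ 2) ^ s) * (‖f m ξ - f n ξ‖₊ : ℝ≥0∞) ^ 2) :=
          (lintegral_add_compl _ (stmt14_measset κ)).symm
      _ < ENNReal.ofReal (ε ^ 2 / 4) + ENNReal.ofReal (ε ^ 2 / 4) :=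
          ENNReal.add_lt_add_of_le_of_lt
            (ne_top_of_le_ne_top ENNReal.ofReal_ne_top htailpart) htailpart hint
      _ ≤ ENNReal.ofReal (ε ^ 2) := by
          rw [← ENNReal.ofReal_add (by positivity) (by positivity)]
          apply ENNReal.ofReal_le_ofReal
          nlinarith [sq_nonneg ε]
end

section
/- Let 0 ≤ s < 1 and let G be a nonempty set of measurable functions g : ℝ → [0, ∞) with sup_{g∈G} ∫_ℝ (1 + ξ²)^s g(ξ) dξ < ∞. Then lim_{κ→∞} sup_{g∈G} ∫_{|ξ| ≥ κ} (1 + ξ²)^s g(ξ) dξ = 0 if and only if lim_{κ→∞} sup_{g∈G} ∫_ℝ ξ⁴ (ξ² + 4κ²)^{-(2-s)} g(ξ) dξ = 0. -/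
open Real MeasureTheory Filter ENNReal

lemma key_R2 (s x d : ℝ) (hx : 0 ≤ x) (hd : 0 < d) :
    x ^ 2 * d ^ (-(2 - s)) ≤ (1 + x) ^ s * ((1 + x) / d) ^ (2 - s) := by
  have h1x : (0:ℝ) < 1 + x := by linarith
  have hrw : ((1 + x) / d) ^ (2 - s) = (1 + x) ^ (2 - s) * d ^ (-(2 - s)) := by
    rw [Real.div_rpow h1x.le hd.le, Real.rpow_neg hd.le, div_eq_mul_inv]
  have h2 : (1 + x) ^ s * (1 + x) ^ (2 - s) = (1 + x) ^ 2 := by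
    rw [← Real.rpow_add h1x]; norm_num [Real.rpow_two]
  have hx2 : x ^ 2 ≤ (1 + x) ^ 2 := by nlinarith
  have hdnn : 0 ≤ d ^ (-(2 - s)) := Real.rpow_nonneg hd.le _
  calc x ^ 2 * d ^ (-(2 - s)) ≤ (1 + x) ^ 2 * d ^ (-(2 - s)) :=
        mul_le_mul_of_nonneg_right hx2 hdnn
    _ = (1 + x) ^ s * ((1 + x) / d) ^ (2 - s) := by rw [hrw, ← mul_assoc, h2]

lemma claim_A (s κ ξ : ℝ) (hs : 0 ≤ s) (hs1 : s ≤ 1) (hκ : 1 ≤ κ) (h : κ ≤ |ξ|) :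
    (1 + ξ ^ 2) ^ s ≤ 50 * (ξ ^ 4 * (ξ ^ 2 + 4 * κ ^ 2) ^ (-(2 - s))) := by
  have hξ1 : 1 ≤ ξ ^ 2 := by nlinarith [abs_nonneg ξ, sq_abs ξ]
  have hκξ : κ ^ 2 ≤ ξ ^ 2 := by nlinarith [abs_nonneg ξ, sq_abs ξ]
  have hξpos : (0:ℝ) < ξ ^ 2 := by linarith
  have h1 : (1 + ξ ^ 2) ^ s ≤ (2 * ξ ^ 2) ^ s :=
    Real.rpow_le_rpow (by positivity) (by linarith) hs
  have h2 : (5 * ξ ^ 2) ^ (-(2 - s)) ≤ (ξ ^ 2 + 4 * κ ^ 2) ^ (-(2 - s)) :=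
    Real.rpow_le_rpow_of_nonpos (by positivity) (by nlinarith) (by linarith)
  have e1 : (2 * ξ ^ 2) ^ s = 2 ^ s * (ξ ^ 2) ^ s :=
    Real.mul_rpow (by norm_num) hξpos.le
  have e2 : (5 * ξ ^ 2) ^ (-(2 - s)) = 5 ^ (-(2-s)) * (ξ ^ 2) ^ (-(2 - s)) :=
    Real.mul_rpow (by norm_num) hξpos.le
  have e3 : ξ ^ 4 * (ξ ^ 2) ^ (-(2 - s)) = (ξ ^ 2) ^ s := by
    have : ξ ^ 4 = (ξ ^ 2) ^ (2:ℝ) := by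
      rw [Real.rpow_two]; ring
    rw [this, ← Real.rpow_add hξpos]
    norm_num
  have h2s : (2:ℝ) ^ s ≤ 2 := by
    calc (2:ℝ) ^ s ≤ 2 ^ (1:ℝ) := Real.rpow_le_rpow_of_exponent_le (by norm_num) hs1
      _ = 2 := Real.rpow_one 2
  have h5 : (1:ℝ)/25 ≤ 5 ^ (-(2-s)) := by
    calc (1:ℝ)/25 = 5 ^ (-(2:ℝ)) := by
          rw [Real.rpow_neg (by norm_num), Real.rpow_two]; norm_num
      _ ≤ 5 ^ (-(2-s)) := Real.rpow_le_rpow_of_exponent_le (by norm_num) (by linarith)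
  have ht : 0 ≤ (ξ ^ 2) ^ s := Real.rpow_nonneg hξpos.le _
  calc (1 + ξ ^ 2) ^ s ≤ 2 ^ s * (ξ ^ 2) ^ s := by rw [← e1]; exact h1
    _ ≤ 50 * (1/25) * (ξ ^ 2) ^ s := by nlinarith
    _ ≤ 50 * (5 ^ (-(2-s)) * (ξ ^ 2) ^ s) := by nlinarith
    _ = 50 * (ξ ^ 4 * (5 * ξ ^ 2) ^ (-(2 - s))) := by rw [e2, ← e3]; ring
    _ ≤ 50 * (ξ ^ 4 * (ξ ^ 2 + 4 * κ ^ 2) ^ (-(2 - s))) := by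
        have h4 : 0 ≤ ξ^4 := by positivity
        nlinarith [h2, h4]

lemma claim_B1 (s κ ξ : ℝ) (hs1 : s ≤ 1) (hκ : 1 ≤ κ) (h : ξ ^ 2 ≤ κ) :
    ξ ^ 4 * (ξ ^ 2 + 4 * κ ^ 2) ^ (-(2 - s)) ≤
      ((1 + κ) / (4 * κ ^ 2)) ^ (2 - s) * (1 + ξ ^ 2) ^ s := by
  have hd : (0:ℝ) < ξ ^ 2 + 4 * κ ^ 2 := by positivity
  have hx : (0:ℝ) ≤ ξ ^ 2 := sq_nonneg ξ
  have h1 := key_R2 s (ξ ^ 2) (ξ ^ 2 + 4 * κ ^ 2) hx hd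
  have he : ξ ^ 4 = (ξ ^ 2) ^ 2 := by ring
  have hr : ((1 + ξ ^ 2) / (ξ ^ 2 + 4 * κ ^ 2)) ^ (2 - s) ≤
      ((1 + κ) / (4 * κ ^ 2)) ^ (2 - s) := by
    apply Real.rpow_le_rpow (by positivity) _ (by linarith)
    rw [div_le_div_iff₀ hd (by positivity)]
    nlinarith
  calc ξ ^ 4 * (ξ ^ 2 + 4 * κ ^ 2) ^ (-(2 - s))
      ≤ (1 + ξ ^ 2) ^ s * ((1 + ξ ^ 2) / (ξ ^ 2 + 4 * κ ^ 2)) ^ (2 - s) := by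
        rw [he]; exact h1
    _ ≤ (1 + ξ ^ 2) ^ s * ((1 + κ) / (4 * κ ^ 2)) ^ (2 - s) :=
        mul_le_mul_of_nonneg_left hr (Real.rpow_nonneg (by positivity) _)
    _ = ((1 + κ) / (4 * κ ^ 2)) ^ (2 - s) * (1 + ξ ^ 2) ^ s := mul_comm _ _

lemma claim_B2 (s κ ξ : ℝ) (hs1 : s ≤ 1) (hκ : 1 ≤ κ) :
    ξ ^ 4 * (ξ ^ 2 + 4 * κ ^ 2) ^ (-(2 - s)) ≤ (1 + ξ ^ 2) ^ s := by
  have hd : (0:ℝ) < ξ ^ 2 + 4 * κ ^ 2 := by positivity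
  have h1 := key_R2 s (ξ ^ 2) (ξ ^ 2 + 4 * κ ^ 2) (sq_nonneg ξ) hd
  have he : ξ ^ 4 = (ξ ^ 2) ^ 2 := by ring
  have hr : ((1 + ξ ^ 2) / (ξ ^ 2 + 4 * κ ^ 2)) ^ (2 - s) ≤ 1 :=
    Real.rpow_le_one (by positivity) (by rw [div_le_one hd]; nlinarith) (by linarith)
  calc ξ ^ 4 * (ξ ^ 2 + 4 * κ ^ 2) ^ (-(2 - s))
      ≤ (1 + ξ ^ 2) ^ s * ((1 + ξ ^ 2) / (ξ ^ 2 + 4 * κ ^ 2)) ^ (2 - s) := by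
        rw [he]; exact h1
    _ ≤ (1 + ξ ^ 2) ^ s * 1 :=
        mul_le_mul_of_nonneg_left hr (Real.rpow_nonneg (by positivity) _)
    _ = (1 + ξ ^ 2) ^ s := mul_one _

lemma claim_C (s κ : ℝ) (hs1 : s ≤ 1) (hκ : 1 ≤ κ) :
    ((1 + κ) / (4 * κ ^ 2)) ^ (2 - s) ≤ 1 / κ := by
  have hκ0 : (0:ℝ) < κ := by linarith
  have h1 : (1 + κ) / (4 * κ ^ 2) ≤ 1 / κ := by
    rw [div_le_div_iff₀ (by positivity) hκ0]; nlinarith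
  have h2 : ((1 + κ) / (4 * κ ^ 2)) ^ (2 - s) ≤ (1/κ) ^ (2 - s) :=
    Real.rpow_le_rpow (by positivity) h1 (by linarith)
  have h3 : (1/κ) ^ (2 - s) ≤ (1/κ) ^ (1:ℝ) := by
    rcases eq_or_lt_of_le hκ with rfl | hκ'
    · simp
    · exact Real.rpow_le_rpow_of_exponent_ge (by positivity)
        (by rw [div_le_one hκ0]; linarith) (by linarith)
  rw [Real.rpow_one] at h3
  linarith

lemma sqrt_tendsto_atTop : Tendsto Real.sqrt atTop atTop := by
  refine (tendsto_rpow_atTop (y := (1/2:ℝ)) (by norm_num)).congr' ?_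
  filter_upwards [eventually_ge_atTop (0:ℝ)] with x hx
  exact (Real.sqrt_eq_rpow x).symm

/-- Let `0 ≤ s < 1` and `G` a nonempty family of measurable
`g : ℝ → [0,∞)` with `sup_{g∈G} ∫ (1+ξ²)^s g(ξ) dξ < ∞`. Then
`lim_{κ→∞} sup_{g∈G} ∫_{|ξ|≥κ} (1+ξ²)^s g(ξ) dξ = 0` iff
`lim_{κ→∞} sup_{g∈G} ∫ ξ⁴ (ξ²+4κ²)^{-(2-s)} g(ξ) dξ = 0`. -/
theorem stmt_16 (s : ℝ) (hs₁ : 0 ≤ s) (hs₂ : s < 1)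
    (G : Set (ℝ → NNReal)) (hG : G.Nonempty)
    (hmeas : ∀ g ∈ G, Measurable g)
    (hM : (⨆ g ∈ G, ∫⁻ ξ : ℝ, ENNReal.ofReal ((1 + ξ ^ 2) ^ s) * (g ξ : ℝ≥0∞)) < ⊤) :
    Tendsto
      (fun κ : ℝ => ⨆ g ∈ G, ∫⁻ ξ : ℝ in {ξ : ℝ | κ ≤ |ξ|},
        ENNReal.ofReal ((1 + ξ ^ 2) ^ s) * (g ξ : ℝ≥0∞))
      atTop (nhds 0)
    ↔ Tendsto
      (fun κ : ℝ => ⨆ g ∈ G, ∫⁻ ξ : ℝ,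
        ENNReal.ofReal (ξ ^ 4 * (ξ ^ 2 + 4 * κ ^ 2) ^ (-(2 - s))) * (g ξ : ℝ≥0∞))
      atTop (nhds 0) := by
  set M : ℝ≥0∞ := ⨆ g ∈ G, ∫⁻ ξ : ℝ, ENNReal.ofReal ((1 + ξ ^ 2) ^ s) * (g ξ : ℝ≥0∞)
    with hMdef
  set F : ℝ → ℝ≥0∞ := fun κ => ⨆ g ∈ G, ∫⁻ ξ : ℝ in {ξ : ℝ | κ ≤ |ξ|},
      ENNReal.ofReal ((1 + ξ ^ 2) ^ s) * (g ξ : ℝ≥0∞) with hFdef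
  set H : ℝ → ℝ≥0∞ := fun κ => ⨆ g ∈ G, ∫⁻ ξ : ℝ,
      ENNReal.ofReal (ξ ^ 4 * (ξ ^ 2 + 4 * κ ^ 2) ^ (-(2 - s))) * (g ξ : ℝ≥0∞) with hHdef
  constructor
  · -- F → 0 implies H → 0
    intro hF
    have hub : ∀ κ : ℝ, 1 ≤ κ →
        H κ ≤ ENNReal.ofReal (1/κ) * M + F (Real.sqrt κ) := by
      intro κ hκ
      refine iSup₂_le fun g hg => ?_
      have hA : MeasurableSet {ξ : ℝ | ξ ^ 2 ≤ κ} :=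
        measurableSet_le (by measurability) measurable_const
      rw [← lintegral_add_compl
        (f := fun ξ : ℝ => ENNReal.ofReal (ξ ^ 4 * (ξ ^ 2 + 4 * κ ^ 2) ^ (-(2 - s))) *
          (g ξ : ℝ≥0∞)) hA]
      refine add_le_add ?_ ?_
      · calc ∫⁻ ξ in {ξ : ℝ | ξ ^ 2 ≤ κ},
              ENNReal.ofReal (ξ ^ 4 * (ξ ^ 2 + 4 * κ ^ 2) ^ (-(2 - s))) * (g ξ : ℝ≥0∞)
            ≤ ∫⁻ ξ in {ξ : ℝ | ξ ^ 2 ≤ κ},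
              ENNReal.ofReal (1/κ) * (ENNReal.ofReal ((1 + ξ ^ 2) ^ s) * (g ξ : ℝ≥0∞)) := by
              refine setLIntegral_mono' hA fun ξ hξ => ?_
              have hb1 := claim_B1 s κ ξ hs₂.le hκ hξ
              have hc := claim_C s κ hs₂.le hκ
              have hw : (0:ℝ) ≤ (1 + ξ ^ 2) ^ s := Real.rpow_nonneg (by positivity) _
              have h1 : ξ ^ 4 * (ξ ^ 2 + 4 * κ ^ 2) ^ (-(2 - s)) ≤ (1/κ) * (1 + ξ ^ 2) ^ s := by
                nlinarith
              calc ENNReal.ofReal (ξ ^ 4 * (ξ ^ 2 + 4 * κ ^ 2) ^ (-(2 - s))) * (g ξ : ℝ≥0∞)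
                  ≤ ENNReal.ofReal ((1/κ) * (1 + ξ ^ 2) ^ s) * (g ξ : ℝ≥0∞) :=
                    mul_le_mul_left (ENNReal.ofReal_le_ofReal h1) _
                _ = ENNReal.ofReal (1/κ) * (ENNReal.ofReal ((1 + ξ ^ 2) ^ s) * (g ξ : ℝ≥0∞)) := by
                    rw [ENNReal.ofReal_mul (by positivity), mul_assoc]
          _ = ENNReal.ofReal (1/κ) *
              ∫⁻ ξ in {ξ : ℝ | ξ ^ 2 ≤ κ},
                ENNReal.ofReal ((1 + ξ ^ 2) ^ s) * (g ξ : ℝ≥0∞) :=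
              lintegral_const_mul' _ _ ENNReal.ofReal_ne_top
          _ ≤ ENNReal.ofReal (1/κ) *
              ∫⁻ ξ : ℝ, ENNReal.ofReal ((1 + ξ ^ 2) ^ s) * (g ξ : ℝ≥0∞) :=
              mul_le_mul_right (setLIntegral_le_lintegral _ _) _
          _ ≤ ENNReal.ofReal (1/κ) * M :=
              mul_le_mul_right (le_iSup₂ (f := fun g (_ : g ∈ G) =>
                ∫⁻ ξ : ℝ, ENNReal.ofReal ((1 + ξ ^ 2) ^ s) * (g ξ : ℝ≥0∞)) g hg) _
      · have hsub : {ξ : ℝ | ξ ^ 2 ≤ κ}ᶜ ⊆ {ξ : ℝ | Real.sqrt κ ≤ |ξ|} := by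
          intro ξ hξ
          simp only [Set.mem_compl_iff, Set.mem_setOf_eq, not_le] at hξ ⊢
          calc Real.sqrt κ ≤ Real.sqrt (ξ ^ 2) := Real.sqrt_le_sqrt hξ.le
            _ = |ξ| := Real.sqrt_sq_eq_abs ξ
        calc ∫⁻ ξ in {ξ : ℝ | ξ ^ 2 ≤ κ}ᶜ,
              ENNReal.ofReal (ξ ^ 4 * (ξ ^ 2 + 4 * κ ^ 2) ^ (-(2 - s))) * (g ξ : ℝ≥0∞)
            ≤ ∫⁻ ξ in {ξ : ℝ | ξ ^ 2 ≤ κ}ᶜ,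
              ENNReal.ofReal ((1 + ξ ^ 2) ^ s) * (g ξ : ℝ≥0∞) :=
              setLIntegral_mono' hA.compl fun ξ _ =>
                mul_le_mul_left (ENNReal.ofReal_le_ofReal (claim_B2 s κ ξ hs₂.le hκ)) _
          _ ≤ ∫⁻ ξ in {ξ : ℝ | Real.sqrt κ ≤ |ξ|},
              ENNReal.ofReal ((1 + ξ ^ 2) ^ s) * (g ξ : ℝ≥0∞) := lintegral_mono_set hsub
          _ ≤ F (Real.sqrt κ) := le_iSup₂ (f := fun g (_ : g ∈ G) =>
              ∫⁻ ξ in {ξ : ℝ | Real.sqrt κ ≤ |ξ|},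
                ENNReal.ofReal ((1 + ξ ^ 2) ^ s) * (g ξ : ℝ≥0∞)) g hg
    have hT1 : Tendsto (fun κ : ℝ => ENNReal.ofReal (1/κ) * M) atTop (nhds 0) := by
      have h0 : Tendsto (fun κ : ℝ => ENNReal.ofReal (1/κ)) atTop (nhds 0) := by
        have hr : Tendsto (fun κ : ℝ => (1:ℝ)/κ) atTop (nhds 0) := by
          simpa [one_div] using (tendsto_inv_atTop_zero (𝕜 := ℝ))
        simpa using ENNReal.tendsto_ofReal hr
      simpa using ENNReal.Tendsto.mul_const h0 (Or.inr hM.ne)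
    have hT2 : Tendsto (fun κ : ℝ => F (Real.sqrt κ)) atTop (nhds 0) :=
      hF.comp sqrt_tendsto_atTop
    have hU : Tendsto (fun κ : ℝ => ENNReal.ofReal (1/κ) * M + F (Real.sqrt κ))
        atTop (nhds 0) := by
      simpa using hT1.add hT2
    refine tendsto_of_tendsto_of_tendsto_of_le_of_le' tendsto_const_nhds hU
      (Eventually.of_forall fun κ => zero_le) ?_
    filter_upwards [eventually_ge_atTop (1:ℝ)] with κ hκ using hub κ hκ
  · -- H → 0 implies F → 0
    intro hH
    have hub : ∀ κ : ℝ, 1 ≤ κ → F κ ≤ ENNReal.ofReal 50 * H κ := by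
      intro κ hκ
      refine iSup₂_le fun g hg => ?_
      calc ∫⁻ ξ in {ξ : ℝ | κ ≤ |ξ|},
            ENNReal.ofReal ((1 + ξ ^ 2) ^ s) * (g ξ : ℝ≥0∞)
          ≤ ∫⁻ ξ in {ξ : ℝ | κ ≤ |ξ|},
            ENNReal.ofReal 50 *
              (ENNReal.ofReal (ξ ^ 4 * (ξ ^ 2 + 4 * κ ^ 2) ^ (-(2 - s))) * (g ξ : ℝ≥0∞)) := by
            refine setLIntegral_mono'
              (measurableSet_le measurable_const (by measurability)) fun ξ hξ => ?_
            have h1 := claim_A s κ ξ hs₁ hs₂.le hκ hξ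
            calc ENNReal.ofReal ((1 + ξ ^ 2) ^ s) * (g ξ : ℝ≥0∞)
                ≤ ENNReal.ofReal (50 * (ξ ^ 4 * (ξ ^ 2 + 4 * κ ^ 2) ^ (-(2 - s)))) *
                  (g ξ : ℝ≥0∞) := mul_le_mul_left (ENNReal.ofReal_le_ofReal h1) _
              _ = ENNReal.ofReal 50 *
                  (ENNReal.ofReal (ξ ^ 4 * (ξ ^ 2 + 4 * κ ^ 2) ^ (-(2 - s))) * (g ξ : ℝ≥0∞)) := by
                  rw [ENNReal.ofReal_mul (by norm_num), mul_assoc]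
        _ = ENNReal.ofReal 50 * ∫⁻ ξ in {ξ : ℝ | κ ≤ |ξ|},
            ENNReal.ofReal (ξ ^ 4 * (ξ ^ 2 + 4 * κ ^ 2) ^ (-(2 - s))) * (g ξ : ℝ≥0∞) :=
            lintegral_const_mul' _ _ ENNReal.ofReal_ne_top
        _ ≤ ENNReal.ofReal 50 * ∫⁻ ξ : ℝ,
            ENNReal.ofReal (ξ ^ 4 * (ξ ^ 2 + 4 * κ ^ 2) ^ (-(2 - s))) * (g ξ : ℝ≥0∞) :=
            mul_le_mul_right (setLIntegral_le_lintegral _ _) _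
        _ ≤ ENNReal.ofReal 50 * H κ := mul_le_mul_right (le_iSup₂ (f := fun g (_ : g ∈ G) =>
            ∫⁻ ξ : ℝ, ENNReal.ofReal (ξ ^ 4 * (ξ ^ 2 + 4 * κ ^ 2) ^ (-(2 - s))) *
              (g ξ : ℝ≥0∞)) g hg) _
    have hU : Tendsto (fun κ : ℝ => ENNReal.ofReal 50 * H κ) atTop (nhds 0) := by
      simpa using ENNReal.Tendsto.const_mul (a := ENNReal.ofReal 50) hH (Or.inr ENNReal.ofReal_ne_top)
    refine tendsto_of_tendsto_of_tendsto_of_le_of_le' tendsto_const_nhds hU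
      (Eventually.of_forall fun κ => zero_le) ?_
    filter_upwards [eventually_ge_atTop (1:ℝ)] with κ hκ using hub κ hκ
end

section
/- Let 0 ≤ s < 1 and let G be a nonempty set of measurable functions g : ℝ → [0, ∞) with sup_{g∈G} ∫_ℝ (1 + ξ²)^s g(ξ) dξ < ∞. Then lim_{κ→∞} sup_{g∈G} ∫_{|ξ| ≥ κ} (1 + ξ²)^s g(ξ) dξ = 0 if and only if lim_{κ→∞} sup_{g∈G} ∫_ℝ ξ² (ξ² + 4κ²)^{-(1-s)} g(ξ) dξ = 0. -/
open Real MeasureTheory Filter ENNReal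

/-- On the low-frequency region `|ξ| ≤ r`, the multiplier is at most `r² (4κ²)^{s-1}`. -/
lemma stmt17_aux_low {s r κ ξ : ℝ} (hs₂ : s < 1) (hκ : 0 < κ) (hξ : |ξ| ≤ r) :
    ξ ^ 2 * (ξ ^ 2 + 4 * κ ^ 2) ^ (-(1 - s)) ≤ r ^ 2 * (4 * κ ^ 2) ^ (-(1 - s)) := by
  have h1 : ξ ^ 2 ≤ r ^ 2 := by
    have := abs_nonneg ξ
    nlinarith [sq_abs ξ]
  have h2 : (ξ ^ 2 + 4 * κ ^ 2) ^ (-(1 - s)) ≤ (4 * κ ^ 2) ^ (-(1 - s)) :=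
    rpow_le_rpow_of_nonpos (by positivity) (by nlinarith [sq_nonneg ξ]) (by linarith)
  exact mul_le_mul h1 h2 (Real.rpow_nonneg (by positivity) _) (by positivity)

/-- On the high-frequency region `1 ≤ |ξ|`, the multiplier is at most `(1+ξ²)^s`. -/
lemma stmt17_aux_tail {s κ ξ : ℝ} (hs₁ : 0 ≤ s) (hs₂ : s < 1) (hξ : 1 ≤ |ξ|) :
    ξ ^ 2 * (ξ ^ 2 + 4 * κ ^ 2) ^ (-(1 - s)) ≤ (1 + ξ ^ 2) ^ s := by
  have hx : (1 : ℝ) ≤ ξ ^ 2 := by nlinarith [sq_abs ξ, abs_nonneg ξ]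
  have hx0 : (0 : ℝ) < ξ ^ 2 := by linarith
  have h2 : (ξ ^ 2 + 4 * κ ^ 2) ^ (-(1 - s)) ≤ (ξ ^ 2) ^ (-(1 - s)) :=
    rpow_le_rpow_of_nonpos hx0 (by nlinarith [sq_nonneg κ]) (by linarith)
  have key : ξ ^ 2 * (ξ ^ 2) ^ (-(1 - s)) = (ξ ^ 2) ^ s := by
    have := Real.rpow_add_one (ne_of_gt hx0) (-(1 - s))
    have hexp : -(1 - s) + 1 = s := by ring
    rw [hexp] at this
    rw [this]; ring
  calc ξ ^ 2 * (ξ ^ 2 + 4 * κ ^ 2) ^ (-(1 - s))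
      ≤ ξ ^ 2 * (ξ ^ 2) ^ (-(1 - s)) := by
        exact mul_le_mul_of_nonneg_left h2 (by positivity)
    _ = (ξ ^ 2) ^ s := key
    _ ≤ (1 + ξ ^ 2) ^ s := Real.rpow_le_rpow (by positivity) (by linarith) hs₁

/-- On the region `κ ≤ |ξ|` (with `κ ≥ 1`), `(1+ξ²)^s` is at most ten times the multiplier. -/
lemma stmt17_aux_cmp {s κ ξ : ℝ} (hs₁ : 0 ≤ s) (hs₂ : s < 1) (hκ : 1 ≤ κ) (hξ : κ ≤ |ξ|) :
    (1 + ξ ^ 2) ^ s ≤ 10 * (ξ ^ 2 * (ξ ^ 2 + 4 * κ ^ 2) ^ (-(1 - s))) := by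
  have habs : (1 : ℝ) ≤ |ξ| := le_trans hκ hξ
  have hx : (1 : ℝ) ≤ ξ ^ 2 := by nlinarith [sq_abs ξ, abs_nonneg ξ]
  have hx0 : (0 : ℝ) < ξ ^ 2 := by linarith
  have hκξ : κ ^ 2 ≤ ξ ^ 2 := by nlinarith [sq_abs ξ, abs_nonneg ξ]
  have step1 : (1 + ξ ^ 2) ^ s ≤ (2 * ξ ^ 2) ^ s :=
    Real.rpow_le_rpow (by positivity) (by linarith) hs₁
  have step2 : (2 * ξ ^ 2) ^ s = 2 ^ s * (ξ ^ 2) ^ s :=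
    Real.mul_rpow (by norm_num) (by positivity)
  have step3 : (2 : ℝ) ^ s ≤ 2 := by
    have := Real.rpow_le_rpow_of_exponent_le (by norm_num : (1:ℝ) ≤ 2) hs₂.le
    simpa using this
  have key : (ξ ^ 2) ^ s = ξ ^ 2 * (ξ ^ 2) ^ (-(1 - s)) := by
    have := Real.rpow_add_one (ne_of_gt hx0) (-(1 - s))
    have hexp : -(1 - s) + 1 = s := by ring
    rw [hexp] at this
    rw [this]; ring
  -- (ξ²)^(-(1-s)) ≤ 5 * (ξ²+4κ²)^(-(1-s))
  have h5a : (5 * ξ ^ 2) ^ (-(1 - s)) ≤ (ξ ^ 2 + 4 * κ ^ 2) ^ (-(1 - s)) :=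
    rpow_le_rpow_of_nonpos (by positivity) (by nlinarith) (by linarith)
  have h5b : (5 * ξ ^ 2) ^ (-(1 - s)) = 5 ^ (-(1 - s)) * (ξ ^ 2) ^ (-(1 - s)) :=
    Real.mul_rpow (by norm_num) (by positivity)
  have h5c : (5 : ℝ)⁻¹ ≤ 5 ^ (-(1 - s)) := by
    have := Real.rpow_le_rpow_of_exponent_le (by norm_num : (1:ℝ) ≤ 5)
      (by linarith : (-1 : ℝ) ≤ -(1 - s))
    simpa [Real.rpow_neg_one] using this
  have h5 : (ξ ^ 2) ^ (-(1 - s)) ≤ 5 * (ξ ^ 2 + 4 * κ ^ 2) ^ (-(1 - s)) := by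
    have hnn : (0:ℝ) ≤ (ξ ^ 2) ^ (-(1 - s)) := Real.rpow_nonneg (by positivity) _
    have h1 : (ξ ^ 2) ^ (-(1 - s)) ≤ 5 * ((5:ℝ)⁻¹ * (ξ ^ 2) ^ (-(1 - s))) := by
      nlinarith
    have h2 : (5:ℝ)⁻¹ * (ξ ^ 2) ^ (-(1 - s)) ≤ 5 ^ (-(1 - s)) * (ξ ^ 2) ^ (-(1 - s)) :=
      mul_le_mul_of_nonneg_right h5c hnn
    calc (ξ ^ 2) ^ (-(1 - s)) ≤ 5 * ((5:ℝ)⁻¹ * (ξ ^ 2) ^ (-(1 - s))) := h1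
      _ ≤ 5 * ((5 * ξ ^ 2) ^ (-(1 - s))) := by rw [h5b]; linarith
      _ ≤ 5 * (ξ ^ 2 + 4 * κ ^ 2) ^ (-(1 - s)) := by linarith
  have hnn2 : (0:ℝ) ≤ (ξ ^ 2) ^ s := Real.rpow_nonneg (by positivity) _
  calc (1 + ξ ^ 2) ^ s ≤ 2 ^ s * (ξ ^ 2) ^ s := by rw [← step2]; exact step1
    _ ≤ 2 * (ξ ^ 2) ^ s := mul_le_mul_of_nonneg_right step3 hnn2
    _ = 2 * (ξ ^ 2 * (ξ ^ 2) ^ (-(1 - s))) := by rw [key]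
    _ ≤ 2 * (ξ ^ 2 * (5 * (ξ ^ 2 + 4 * κ ^ 2) ^ (-(1 - s)))) := by
        have := mul_le_mul_of_nonneg_left h5 (le_of_lt hx0)
        linarith
    _ = 10 * (ξ ^ 2 * (ξ ^ 2 + 4 * κ ^ 2) ^ (-(1 - s))) := by ring

/-- Let `0 ≤ s < 1` and `G` a nonempty family of measurable
`g : ℝ → [0,∞)` with `sup_{g∈G} ∫ (1+ξ²)^s g(ξ) dξ < ∞`. Then
`lim_{κ→∞} sup_{g∈G} ∫_{|ξ|≥κ} (1+ξ²)^s g(ξ) dξ = 0` iff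
`lim_{κ→∞} sup_{g∈G} ∫ ξ² (ξ²+4κ²)^{-(1-s)} g(ξ) dξ = 0`. -/
theorem stmt_17 (s : ℝ) (hs₁ : 0 ≤ s) (hs₂ : s < 1)
    (G : Set (ℝ → NNReal)) (hG : G.Nonempty)
    (hmeas : ∀ g ∈ G, Measurable g)
    (hM : (⨆ g ∈ G, ∫⁻ ξ : ℝ, ENNReal.ofReal ((1 + ξ ^ 2) ^ s) * (g ξ : ℝ≥0∞)) < ⊤) :
    Tendsto
      (fun κ : ℝ => ⨆ g ∈ G, ∫⁻ ξ : ℝ in {ξ : ℝ | κ ≤ |ξ|},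
        ENNReal.ofReal ((1 + ξ ^ 2) ^ s) * (g ξ : ℝ≥0∞))
      atTop (nhds 0)
    ↔ Tendsto
      (fun κ : ℝ => ⨆ g ∈ G, ∫⁻ ξ : ℝ,
        ENNReal.ofReal (ξ ^ 2 * (ξ ^ 2 + 4 * κ ^ 2) ^ (-(1 - s))) * (g ξ : ℝ≥0∞))
      atTop (nhds 0) := by
  set M : ℝ≥0∞ := ⨆ g ∈ G, ∫⁻ ξ : ℝ, ENNReal.ofReal ((1 + ξ ^ 2) ^ s) * (g ξ : ℝ≥0∞) with hMdef
  have hM' : M ≠ ⊤ := ne_of_lt hM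
  -- integrals dominated by M
  have hle_M : ∀ g ∈ G, (∫⁻ ξ : ℝ, ENNReal.ofReal ((1 + ξ ^ 2) ^ s) * (g ξ : ℝ≥0∞)) ≤ M := by
    intro g hg
    exact le_iSup₂ (f := fun g (_ : g ∈ G) =>
      ∫⁻ ξ : ℝ, ENNReal.ofReal ((1 + ξ ^ 2) ^ s) * (g ξ : ℝ≥0∞)) g hg
  have hone : ∀ (g : ℝ → NNReal) (ξ : ℝ),
      (g ξ : ℝ≥0∞) ≤ ENNReal.ofReal ((1 + ξ ^ 2) ^ s) * (g ξ : ℝ≥0∞) := by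
    intro g ξ
    have h1 : (1 : ℝ≥0∞) ≤ ENNReal.ofReal ((1 + ξ ^ 2) ^ s) := by
      rw [ENNReal.one_le_ofReal]
      exact Real.one_le_rpow (by nlinarith [sq_nonneg ξ]) hs₁
    calc (g ξ : ℝ≥0∞) = 1 * (g ξ : ℝ≥0∞) := (one_mul _).symm
      _ ≤ ENNReal.ofReal ((1 + ξ ^ 2) ^ s) * (g ξ : ℝ≥0∞) := mul_le_mul_left h1 _
  constructor
  · -- (⇒)
    intro hF
    rw [ENNReal.tendsto_nhds_zero] at hF ⊢
    intro ε hε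
    set ε' : ℝ≥0∞ := min ε 1 with hε'def
    have hε'0 : ε' ≠ 0 := ne_of_gt (lt_min hε one_pos)
    have hε't : ε' ≠ ⊤ := ne_top_of_le_ne_top (by norm_num) (min_le_right _ _)
    have hε'le : ε' ≤ ε := min_le_left _ _
    have hhalf0 : (0 : ℝ≥0∞) < ε' / 2 := ENNReal.div_pos hε'0 (by norm_num)
    obtain ⟨r₀, hr₀⟩ := (eventually_atTop).mp (hF (ε' / 2) hhalf0)
    set r : ℝ := max r₀ 1 with hrdef
    have hr1 : (1 : ℝ) ≤ r := le_max_right _ _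
    have hFr : (⨆ g ∈ G, ∫⁻ ξ : ℝ in {ξ : ℝ | r ≤ |ξ|},
        ENNReal.ofReal ((1 + ξ ^ 2) ^ s) * (g ξ : ℝ≥0∞)) ≤ ε' / 2 :=
      hr₀ r (le_max_left _ _)
    -- choose δ
    set δ : ℝ := (ε' / 2).toReal / (M.toReal + 1) with hδdef
    have hMrnn : (0 : ℝ) ≤ M.toReal := ENNReal.toReal_nonneg
    have hδpos : 0 < δ := by
      apply div_pos
      · exact ENNReal.toReal_pos (by simp [ENNReal.div_eq_top, hε'0, hε't]) 
          (by simp [ENNReal.div_eq_top, hε'0, hε't])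
      · linarith
    have hδM : ENNReal.ofReal δ * M ≤ ε' / 2 := by
      have hMeq : M = ENNReal.ofReal M.toReal := (ENNReal.ofReal_toReal hM').symm
      rw [hMeq, ← ENNReal.ofReal_mul hδpos.le]
      have h1 : δ * M.toReal ≤ (ε' / 2).toReal := by
        rw [hδdef, div_mul_eq_mul_div, div_le_iff₀ (by linarith : (0:ℝ) < M.toReal + 1)]
        nlinarith [ENNReal.toReal_nonneg (a := ε' / 2)]
      calc ENNReal.ofReal (δ * M.toReal) ≤ ENNReal.ofReal (ε' / 2).toReal :=
            ENNReal.ofReal_le_ofReal h1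
        _ = ε' / 2 := ENNReal.ofReal_toReal (by simp [ENNReal.div_eq_top, hε'0, hε't])
    -- eventually r² (4κ²)^(s-1) ≤ δ
    have htend : Tendsto (fun κ : ℝ => r ^ 2 * (4 * κ ^ 2) ^ (-(1 - s))) atTop (nhds 0) := by
      have h1 : Tendsto (fun κ : ℝ => 4 * κ ^ 2) atTop atTop :=
        (tendsto_pow_atTop (by norm_num : 2 ≠ 0)).const_mul_atTop (by norm_num)
      have h2 : Tendsto (fun x : ℝ => x ^ (-(1 - s))) atTop (nhds 0) :=
        tendsto_rpow_neg_atTop (by linarith)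
      have h3 := (h2.comp h1).const_mul (r ^ 2)
      simpa using h3
    have hev : ∀ᶠ κ : ℝ in atTop, r ^ 2 * (4 * κ ^ 2) ^ (-(1 - s)) < δ :=
      htend.eventually_lt_const hδpos
    filter_upwards [hev, eventually_ge_atTop (1 : ℝ)] with κ hκδ hκ1
    -- bound the sup
    apply le_trans _ hε'le
    apply iSup₂_le
    intro g hg
    have hA : MeasurableSet {ξ : ℝ | r ≤ |ξ|} :=
      (isClosed_le continuous_const continuous_abs).measurableSet
    have hsplit := lintegral_add_compl
      (fun ξ : ℝ => ENNReal.ofReal (ξ ^ 2 * (ξ ^ 2 + 4 * κ ^ 2) ^ (-(1 - s))) * (g ξ : ℝ≥0∞))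
      (μ := volume) hA
    rw [← hsplit]
    have hbound1 : (∫⁻ ξ : ℝ in {ξ : ℝ | r ≤ |ξ|},
        ENNReal.ofReal (ξ ^ 2 * (ξ ^ 2 + 4 * κ ^ 2) ^ (-(1 - s))) * (g ξ : ℝ≥0∞)) ≤ ε' / 2 := by
      have hmono : (∫⁻ ξ : ℝ in {ξ : ℝ | r ≤ |ξ|},
          ENNReal.ofReal (ξ ^ 2 * (ξ ^ 2 + 4 * κ ^ 2) ^ (-(1 - s))) * (g ξ : ℝ≥0∞)) ≤
          ∫⁻ ξ : ℝ in {ξ : ℝ | r ≤ |ξ|},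
          ENNReal.ofReal ((1 + ξ ^ 2) ^ s) * (g ξ : ℝ≥0∞) := by
        apply setLIntegral_mono' hA
        intro ξ hξ
        apply mul_le_mul_left
        apply ENNReal.ofReal_le_ofReal
        exact stmt17_aux_tail hs₁ hs₂ (le_trans hr1 hξ)
      refine le_trans hmono (le_trans ?_ hFr)
      exact le_iSup₂ (f := fun g (_ : g ∈ G) => ∫⁻ ξ : ℝ in {ξ : ℝ | r ≤ |ξ|},
        ENNReal.ofReal ((1 + ξ ^ 2) ^ s) * (g ξ : ℝ≥0∞)) g hg
    have hbound2 : (∫⁻ ξ : ℝ in {ξ : ℝ | r ≤ |ξ|}ᶜ,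
        ENNReal.ofReal (ξ ^ 2 * (ξ ^ 2 + 4 * κ ^ 2) ^ (-(1 - s))) * (g ξ : ℝ≥0∞)) ≤ ε' / 2 := by
      have hmono : (∫⁻ ξ : ℝ in {ξ : ℝ | r ≤ |ξ|}ᶜ,
          ENNReal.ofReal (ξ ^ 2 * (ξ ^ 2 + 4 * κ ^ 2) ^ (-(1 - s))) * (g ξ : ℝ≥0∞)) ≤
          ∫⁻ ξ : ℝ in {ξ : ℝ | r ≤ |ξ|}ᶜ, ENNReal.ofReal δ * (g ξ : ℝ≥0∞) := by
        apply setLIntegral_mono' hA.compl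
        intro ξ hξ
        apply mul_le_mul_left
        apply ENNReal.ofReal_le_ofReal
        have hξr : |ξ| ≤ r := by
          simp only [Set.mem_compl_iff, Set.mem_setOf_eq, not_le] at hξ
          exact hξ.le
        exact le_trans (stmt17_aux_low hs₂ (by linarith : (0:ℝ) < κ) hξr) hκδ.le
      refine le_trans hmono ?_
      calc (∫⁻ ξ : ℝ in {ξ : ℝ | r ≤ |ξ|}ᶜ, ENNReal.ofReal δ * (g ξ : ℝ≥0∞))
          ≤ ∫⁻ ξ : ℝ, ENNReal.ofReal δ * (g ξ : ℝ≥0∞) := setLIntegral_le_lintegral _ _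
        _ = ENNReal.ofReal δ * ∫⁻ ξ : ℝ, (g ξ : ℝ≥0∞) :=
            lintegral_const_mul' _ _ ENNReal.ofReal_ne_top
        _ ≤ ENNReal.ofReal δ * ∫⁻ ξ : ℝ, ENNReal.ofReal ((1 + ξ ^ 2) ^ s) * (g ξ : ℝ≥0∞) :=
            mul_le_mul_right (lintegral_mono (hone g)) _
        _ ≤ ENNReal.ofReal δ * M := mul_le_mul_right (hle_M g hg) _
        _ ≤ ε' / 2 := hδM
    calc (∫⁻ ξ : ℝ in {ξ : ℝ | r ≤ |ξ|},
          ENNReal.ofReal (ξ ^ 2 * (ξ ^ 2 + 4 * κ ^ 2) ^ (-(1 - s))) * (g ξ : ℝ≥0∞))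
        + (∫⁻ ξ : ℝ in {ξ : ℝ | r ≤ |ξ|}ᶜ,
          ENNReal.ofReal (ξ ^ 2 * (ξ ^ 2 + 4 * κ ^ 2) ^ (-(1 - s))) * (g ξ : ℝ≥0∞))
        ≤ ε' / 2 + ε' / 2 := add_le_add hbound1 hbound2
      _ = ε' := ENNReal.add_halves ε'
  · -- (⇐)
    intro hH
    rw [ENNReal.tendsto_nhds_zero] at hH ⊢
    intro ε hε
    rcases eq_or_ne ε ⊤ with rfl | hεt
    · filter_upwards with κ; exact le_top
    have h10 : (0 : ℝ≥0∞) < ε / 10 := ENNReal.div_pos (ne_of_gt hε) (by norm_num)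
    filter_upwards [hH (ε / 10) h10, eventually_ge_atTop (1 : ℝ)] with κ hκH hκ1
    apply iSup₂_le
    intro g hg
    have hcalc : (∫⁻ ξ : ℝ in {ξ : ℝ | κ ≤ |ξ|},
        ENNReal.ofReal ((1 + ξ ^ 2) ^ s) * (g ξ : ℝ≥0∞)) ≤
        10 * ∫⁻ ξ : ℝ,
          ENNReal.ofReal (ξ ^ 2 * (ξ ^ 2 + 4 * κ ^ 2) ^ (-(1 - s))) * (g ξ : ℝ≥0∞) := by
      have hA : MeasurableSet {ξ : ℝ | κ ≤ |ξ|} :=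
        (isClosed_le continuous_const continuous_abs).measurableSet
      calc (∫⁻ ξ : ℝ in {ξ : ℝ | κ ≤ |ξ|},
            ENNReal.ofReal ((1 + ξ ^ 2) ^ s) * (g ξ : ℝ≥0∞))
          ≤ ∫⁻ ξ : ℝ in {ξ : ℝ | κ ≤ |ξ|},
            10 * (ENNReal.ofReal (ξ ^ 2 * (ξ ^ 2 + 4 * κ ^ 2) ^ (-(1 - s))) * (g ξ : ℝ≥0∞)) := by
            apply setLIntegral_mono' hA
            intro ξ hξ
            have := stmt17_aux_cmp hs₁ hs₂ hκ1 hξ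
            calc ENNReal.ofReal ((1 + ξ ^ 2) ^ s) * (g ξ : ℝ≥0∞)
                ≤ ENNReal.ofReal (10 * (ξ ^ 2 * (ξ ^ 2 + 4 * κ ^ 2) ^ (-(1 - s)))) * (g ξ : ℝ≥0∞) :=
                  mul_le_mul_left (ENNReal.ofReal_le_ofReal this) _
              _ = 10 * (ENNReal.ofReal (ξ ^ 2 * (ξ ^ 2 + 4 * κ ^ 2) ^ (-(1 - s))) * (g ξ : ℝ≥0∞)) := by
                  rw [ENNReal.ofReal_mul (by norm_num : (0:ℝ) ≤ 10), ENNReal.ofReal_ofNat,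
                    mul_assoc]
        _ ≤ ∫⁻ ξ : ℝ,
            10 * (ENNReal.ofReal (ξ ^ 2 * (ξ ^ 2 + 4 * κ ^ 2) ^ (-(1 - s))) * (g ξ : ℝ≥0∞)) :=
            setLIntegral_le_lintegral _ _
        _ = 10 * ∫⁻ ξ : ℝ,
            ENNReal.ofReal (ξ ^ 2 * (ξ ^ 2 + 4 * κ ^ 2) ^ (-(1 - s))) * (g ξ : ℝ≥0∞) :=
            lintegral_const_mul' _ _ (by norm_num)
    refine le_trans hcalc ?_
    have hle : (∫⁻ ξ : ℝ,
        ENNReal.ofReal (ξ ^ 2 * (ξ ^ 2 + 4 * κ ^ 2) ^ (-(1 - s))) * (g ξ : ℝ≥0∞)) ≤ ε / 10 := by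
      refine le_trans ?_ hκH
      exact le_iSup₂ (f := fun g (_ : g ∈ G) => ∫⁻ ξ : ℝ,
        ENNReal.ofReal (ξ ^ 2 * (ξ ^ 2 + 4 * κ ^ 2) ^ (-(1 - s))) * (g ξ : ℝ≥0∞)) g hg
    calc (10 : ℝ≥0∞) * ∫⁻ ξ : ℝ,
          ENNReal.ofReal (ξ ^ 2 * (ξ ^ 2 + 4 * κ ^ 2) ^ (-(1 - s))) * (g ξ : ℝ≥0∞)
        ≤ 10 * (ε / 10) := mul_le_mul_right hle _
      _ = ε := ENNReal.mul_div_cancel' (by norm_num) (by norm_num)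
end
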